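/- arXiv:1705.09798 — 9 statements merged into one kernel-verified Lean document; each statement's English description precedes it below -/
import Mathlib

section
/- Fix reals s with 0 < s ≤ 1, p > 0, x ≥ 0, reals a₁, a₂, a₃ > 0 with a₁+a₂+a₃ = s, and reals aᵢ⁺⁺ with 0 ≤ aᵢ⁺⁺ ≤ aᵢ for i ∈ {1,2,3} (indices cyclic mod 3). Then (x/3)·((Σᵢ₌₁³ s/aᵢ) − 9) + p·Σᵢ₌₁³ aᵢ⁺⁺·(aᵢ₋₁/aᵢ − 1) ≥ −p. (This says that the drift φ̇ of the potential φ = ln(a₁a₂a₃) under the oscillator dynamics is always at least −p.) -/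
/-- The drift `φ̇` of the potential `φ = ln(a₁a₂a₃)` under the oscillator
dynamics is always at least `−p`. -/
theorem oscillator_phi_drift_lower_bound
    (s p x : ℝ) (hs : 0 < s) (hs1 : s ≤ 1) (hp : 0 < p) (hx : 0 ≤ x)
    (a app : ZMod 3 → ℝ)
    (hpos : ∀ i, 0 < a i)
    (hsum : a 0 + a 1 + a 2 = s)
    (happ : ∀ i, 0 ≤ app i ∧ app i ≤ a i) :
    x / 3 * ((∑ i : ZMod 3, s / a i) - 9)
        + p * ∑ i : ZMod 3, app i * (a (i - 1) / a i - 1)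
      ≥ -p := by
  have e0 : (0:ZMod 3) - 1 = 2 := by decide
  have e1 : (1:ZMod 3) - 1 = 0 := by decide
  have e2 : (2:ZMod 3) - 1 = 1 := by decide
  have hsum3 : ∀ f : ZMod 3 → ℝ, ∑ i : ZMod 3, f i = f 0 + f 1 + f 2 := by
    intro f
    show f 0 + (f 1 + (f 2 + 0)) = _
    ring
  rw [hsum3, hsum3, e0, e1, e2]
  have h0 := hpos 0; have h1 := hpos 1; have h2 := hpos 2
  have k0 := happ 0; have k1 := happ 1; have k2 := happ 2
  have hA : x / 3 * (s / a 0 + s / a 1 + s / a 2 - 9) ≥ 0 := by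
    have h9 : s / a 0 + s / a 1 + s / a 2 ≥ 9 := by
      rw [ge_iff_le, div_add_div _ _ (ne_of_gt h0) (ne_of_gt h1),
        div_add_div _ _ (mul_ne_zero (ne_of_gt h0) (ne_of_gt h1)) (ne_of_gt h2),
        le_div_iff₀ (by positivity)]
      nlinarith [sq_nonneg (a 0 - a 1), sq_nonneg (a 1 - a 2), sq_nonneg (a 0 - a 2),
        mul_pos h0 h1, mul_pos h1 h2, mul_pos h0 h2, mul_pos (mul_pos h0 h1) h2]
    have := div_nonneg hx (by norm_num : (0:ℝ) ≤ 3)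
    nlinarith
  have hB : p * (app 0 * (a 2 / a 0 - 1) + app 1 * (a 0 / a 1 - 1)
      + app 2 * (a 1 / a 2 - 1)) ≥ -p := by
    have t0 : app 0 * (a 2 / a 0 - 1) ≥ -(a 0) := by
      have hr : a 2 / a 0 - 1 ≥ -1 := by
        have : 0 ≤ a 2 / a 0 := by positivity
        linarith
      rcases le_or_gt 0 (a 2 / a 0 - 1) with h | h
      · nlinarith [k0.1, k0.2]
      · nlinarith [k0.1, k0.2]
    have t1 : app 1 * (a 0 / a 1 - 1) ≥ -(a 1) := by
      have hr : a 0 / a 1 - 1 ≥ -1 := by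
        have : 0 ≤ a 0 / a 1 := by positivity
        linarith
      rcases le_or_gt 0 (a 0 / a 1 - 1) with h | h
      · nlinarith [k1.1, k1.2]
      · nlinarith [k1.1, k1.2]
    have t2 : app 2 * (a 1 / a 2 - 1) ≥ -(a 2) := by
      have hr : a 1 / a 2 - 1 ≥ -1 := by
        have : 0 ≤ a 1 / a 2 := by positivity
        linarith
      rcases le_or_gt 0 (a 1 / a 2 - 1) with h | h
      · nlinarith [k2.1, k2.2]
      · nlinarith [k2.1, k2.2]
    nlinarith [hp.le]
  linarith
end

section
/- Fix reals s with 0 < s ≤ 1 and p > 0, reals a₁, a₂, a₃ > 0 with a₁+a₂+a₃ = s, and reals aᵢ⁺⁺ with 0 ≤ aᵢ⁺⁺ ≤ aᵢ for i ∈ {1,2,3} (indices cyclic mod 3). Define κᵢ = s·aᵢ⁺⁺/aᵢ − aᵢ, δᵢ = aᵢ − aᵢ₋₁, δ = √(δ₁²+δ₂²+δ₃²), κ = √(κ₁²+κ₂²+κ₃²), and ȧᵢ = p·aᵢ₋₁(aᵢ + aᵢ⁺⁺) − p·aᵢ(aᵢ₊₁ + aᵢ₊₁⁺⁺) (the oscillator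 drift with x = 0). Then Σᵢ₌₁³ ȧᵢ/aᵢ ≤ (p/s)·(−δ²/2 + κ·δ). -/
set_option maxHeartbeats 1000000


/-- With no source (`x = 0`), the drift of the potential `φ = ln(a₁a₂a₃)`
satisfies `φ̇ ≤ (p/s)(−δ²/2 + κδ)`, where `δ = √(Σδᵢ²)`, `δᵢ = aᵢ − aᵢ₋₁`,
`κ = √(Σκᵢ²)`, `κᵢ = s·aᵢ⁺⁺/aᵢ − aᵢ`. -/
theorem oscillator_phi_drift_upper_bound
    (s p : ℝ) (hs : 0 < s) (hs1 : s ≤ 1) (hp : 0 < p)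
    (a app : ZMod 3 → ℝ)
    (hpos : ∀ i, 0 < a i)
    (hsum : a 0 + a 1 + a 2 = s)
    (happ : ∀ i, 0 ≤ app i ∧ app i ≤ a i) :
    (∑ i : ZMod 3,
        (p * a (i - 1) * (a i + app i) - p * a i * (a (i + 1) + app (i + 1))) / a i)
      ≤ p / s * (-(∑ i : ZMod 3, (a i - a (i - 1)) ^ 2) / 2
          + Real.sqrt (∑ i : ZMod 3, (s * app i / a i - a i) ^ 2)
            * Real.sqrt (∑ i : ZMod 3, (a i - a (i - 1)) ^ 2)) := by
  have hsum3 : ∀ f : ZMod 3 → ℝ, ∑ i : ZMod 3, f i = f 0 + f 1 + f 2 :=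
    fun f => Fin.sum_univ_three f
  have h0 := hpos 0
  have h1 := hpos 1
  have h2 := hpos 2
  have e01 : (0:ZMod 3) - 1 = 2 := by decide
  have e11 : (1:ZMod 3) - 1 = 0 := by decide
  have e21 : (2:ZMod 3) - 1 = 1 := by decide
  have e0p : (0:ZMod 3) + 1 = 1 := by decide
  have e1p : (1:ZMod 3) + 1 = 2 := by decide
  have e2p : (2:ZMod 3) + 1 = 0 := by decide
  set k0 : ℝ := s * app 0 / a 0 - a 0 with hk0
  set k1 : ℝ := s * app 1 / a 1 - a 1 with hk1
  set k2 : ℝ := s * app 2 / a 2 - a 2 with hk2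
  set d0 : ℝ := a 0 - a 2 with hd0
  set d1 : ℝ := a 1 - a 0 with hd1
  set d2 : ℝ := a 2 - a 1 with hd2
  have hS : (∑ i : ZMod 3, (a i - a (i - 1)) ^ 2) = d0 ^ 2 + d1 ^ 2 + d2 ^ 2 := by
    rw [hsum3]; rw [e01, e11, e21]
  have hK : (∑ i : ZMod 3, (s * app i / a i - a i) ^ 2) = k0 ^ 2 + k1 ^ 2 + k2 ^ 2 := by
    rw [hsum3]
  have hSnn : (0:ℝ) ≤ d0 ^ 2 + d1 ^ 2 + d2 ^ 2 := by positivity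
  have hKnn : (0:ℝ) ≤ k0 ^ 2 + k1 ^ 2 + k2 ^ 2 := by positivity
  -- Key identity: LHS = p/s * (-(S)/2 - T) with T = Σ κᵢδᵢ
  have key : (∑ i : ZMod 3,
        (p * a (i - 1) * (a i + app i) - p * a i * (a (i + 1) + app (i + 1))) / a i)
      = p / s * (-(d0 ^ 2 + d1 ^ 2 + d2 ^ 2) / 2 - (k0 * d0 + k1 * d1 + k2 * d2)) := by
    rw [hsum3]; rw [e01, e11, e21, e0p, e1p, e2p]
    rw [hk0, hk1, hk2, hd0, hd1, hd2]
    field_simp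
    ring
  rw [key, hS, hK]
  have hT : -(k0 * d0 + k1 * d1 + k2 * d2)
      ≤ Real.sqrt (k0 ^ 2 + k1 ^ 2 + k2 ^ 2) * Real.sqrt (d0 ^ 2 + d1 ^ 2 + d2 ^ 2) := by
    have h1' : (k0 * d0 + k1 * d1 + k2 * d2) ^ 2
        ≤ (k0 ^ 2 + k1 ^ 2 + k2 ^ 2) * (d0 ^ 2 + d1 ^ 2 + d2 ^ 2) := by
      nlinarith [sq_nonneg (k0 * d1 - k1 * d0), sq_nonneg (k0 * d2 - k2 * d0),
        sq_nonneg (k1 * d2 - k2 * d1)]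
    calc -(k0 * d0 + k1 * d1 + k2 * d2) ≤ |k0 * d0 + k1 * d1 + k2 * d2| := neg_le_abs _
      _ = Real.sqrt ((k0 * d0 + k1 * d1 + k2 * d2) ^ 2) := (Real.sqrt_sq_eq_abs _).symm
      _ ≤ Real.sqrt ((k0 ^ 2 + k1 ^ 2 + k2 ^ 2) * (d0 ^ 2 + d1 ^ 2 + d2 ^ 2)) :=
          Real.sqrt_le_sqrt h1'
      _ = _ := Real.sqrt_mul hKnn _
  have hps : 0 < p / s := div_pos hp hs
  have := mul_le_mul_of_nonneg_left hT hps.le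
  nlinarith [this]
end

section
/- Fix reals s with 0 < s ≤ 1 and p > 0, reals a₁, a₂, a₃ > 0 with a₁+a₂+a₃ = s, and reals aᵢ⁺⁺ with 0 ≤ aᵢ⁺⁺ ≤ aᵢ for i ∈ {1,2,3} (indices cyclic mod 3). Define κᵢ = s·aᵢ⁺⁺/aᵢ − aᵢ, δᵢ = aᵢ − aᵢ₋₁, δ = √(δ₁²+δ₂²+δ₃²), κ = √(κ₁²+κ₂²+κ₃²), and ȧᵢ = p·aᵢ₋₁(aᵢ + aᵢ⁺⁺) − p·aᵢ(aᵢ₊₁ + aᵢ₊₁⁺⁺). Then for each i ∈ {1,2,3}: |ȧᵢ| ≤ p·aᵢ·(2δ + κ). -/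
lemma aux_drift (s p D K a0 a1 a2 b1 b2 : ℝ)
    (hs : 0 < s) (hp : 0 < p)
    (h0 : 0 < a0) (h1 : 0 < a1) (h2 : 0 < a2)
    (hsum : a0 + a1 + a2 = s)
    (hD : |a0 - a2| ≤ D) (hD1 : |a2 - a1| ≤ D)
    (hK1 : |s * b1 / a1 - a1| ≤ K) (hK2 : |s * b2 / a2 - a2| ≤ K) :
    |p * a0 * (a1 + b1) - p * a1 * (a2 + b2)| ≤ p * a1 * (2 * D + K) := by
  have hD0 : 0 ≤ D := (abs_nonneg _).trans hD
  have hK0 : 0 ≤ K := (abs_nonneg _).trans hK1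
  set k1 := s * b1 / a1 - a1 with hk1
  set k2 := s * b2 / a2 - a2 with hk2
  have hiden : p * a0 * (a1 + b1) - p * a1 * (a2 + b2)
      = p * a1 * ((a0 - a2) + (a0 * k1 - a2 * k2) / s
        + (-(a0 * (a2 - a1)) + a2 * (a0 - a2)) / s) := by
    rw [hk1, hk2]
    field_simp
    ring
  rw [hiden, abs_mul, abs_of_pos (mul_pos hp h1)]
  have hT2 : |(a0 * k1 - a2 * k2) / s| ≤ K := by
    rw [abs_div, abs_of_pos hs, div_le_iff₀ hs]
    calc |a0 * k1 - a2 * k2| = |a0 * k1 + -(a2 * k2)| := by ring_nf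
      _ ≤ |a0 * k1| + |-(a2 * k2)| := abs_add_le _ _
      _ = a0 * |k1| + a2 * |k2| := by
          rw [abs_neg, abs_mul, abs_mul, abs_of_pos h0, abs_of_pos h2]
      _ ≤ a0 * K + a2 * K := by
          have := mul_le_mul_of_nonneg_left hK1 h0.le
          have := mul_le_mul_of_nonneg_left hK2 h2.le
          linarith
      _ ≤ K * s := by nlinarith
  have hT3 : |(-(a0 * (a2 - a1)) + a2 * (a0 - a2)) / s| ≤ D := by
    rw [abs_div, abs_of_pos hs, div_le_iff₀ hs]
    calc |(-(a0 * (a2 - a1)) + a2 * (a0 - a2))|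
        ≤ |(-(a0 * (a2 - a1)))| + |a2 * (a0 - a2)| := abs_add_le _ _
      _ = a0 * |a2 - a1| + a2 * |a0 - a2| := by
          rw [abs_neg, abs_mul, abs_mul, abs_of_pos h0, abs_of_pos h2]
      _ ≤ a0 * D + a2 * D := by
          have := mul_le_mul_of_nonneg_left hD1 h0.le
          have := mul_le_mul_of_nonneg_left hD h2.le
          linarith
      _ ≤ D * s := by nlinarith
  have hX : |(a0 - a2) + (a0 * k1 - a2 * k2) / s
      + (-(a0 * (a2 - a1)) + a2 * (a0 - a2)) / s| ≤ 2 * D + K := by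
    have t1 := abs_add_le ((a0 - a2) + (a0 * k1 - a2 * k2) / s)
      ((-(a0 * (a2 - a1)) + a2 * (a0 - a2)) / s)
    have t2 := abs_add_le (a0 - a2) ((a0 * k1 - a2 * k2) / s)
    linarith
  have := mul_le_mul_of_nonneg_left hX (le_of_lt (mul_pos hp h1))
  linarith

/-- With no source, the drift of each species satisfies `|ȧᵢ| ≤ p·aᵢ·(2δ + κ)`. -/
theorem oscillator_species_drift_bound
    (s p : ℝ) (hs : 0 < s) (hs1 : s ≤ 1) (hp : 0 < p)
    (a app : ZMod 3 → ℝ)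
    (hpos : ∀ i, 0 < a i)
    (hsum : a 0 + a 1 + a 2 = s)
    (happ : ∀ i, 0 ≤ app i ∧ app i ≤ a i) :
    ∀ i : ZMod 3,
      |p * a (i - 1) * (a i + app i) - p * a i * (a (i + 1) + app (i + 1))|
        ≤ p * a i * (2 * Real.sqrt (∑ j : ZMod 3, (a j - a (j - 1)) ^ 2)
            + Real.sqrt (∑ j : ZMod 3, (s * app j / a j - a j) ^ 2)) := by
  have key : ∀ (f : ZMod 3 → ℝ) (j : ZMod 3),
      |f j| ≤ Real.sqrt (∑ k : ZMod 3, (f k) ^ 2) := by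
    intro f j
    rw [← Real.sqrt_sq_eq_abs]
    exact Real.sqrt_le_sqrt
      (Finset.single_le_sum (fun k _ => sq_nonneg (f k)) (Finset.mem_univ j))
  have hcases : ∀ j : ZMod 3, j = 0 ∨ j = 1 ∨ j = 2 := by decide
  have e0 : (0 : ZMod 3) - 1 = 2 := by decide
  have e1 : (1 : ZMod 3) - 1 = 0 := by decide
  have e2 : (2 : ZMod 3) - 1 = 1 := by decide
  have f0 : (0 : ZMod 3) + 1 = 1 := by decide
  have f1 : (1 : ZMod 3) + 1 = 2 := by decide
  have f2 : (2 : ZMod 3) + 1 = 0 := by decide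
  intro i
  rcases hcases i with rfl | rfl | rfl
  · rw [e0, f0]
    have hD := key (fun j => a j - a (j - 1)) 2
    have hD1 := key (fun j => a j - a (j - 1)) 1
    have hK1 := key (fun j => s * app j / a j - a j) 0
    have hK2 := key (fun j => s * app j / a j - a j) 1
    simp only [e1, e2] at hD hD1
    exact aux_drift s p _ _ (a 2) (a 0) (a 1) (app 0) (app 1) hs hp
      (hpos 2) (hpos 0) (hpos 1) (by linarith)
      hD hD1 hK1 hK2
  · rw [e1, f1]
    have hD := key (fun j => a j - a (j - 1)) 0
    have hD1 := key (fun j => a j - a (j - 1)) 2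
    have hK1 := key (fun j => s * app j / a j - a j) 1
    have hK2 := key (fun j => s * app j / a j - a j) 2
    simp only [e0, e2] at hD hD1
    exact aux_drift s p _ _ (a 0) (a 1) (a 2) (app 1) (app 2) hs hp
      (hpos 0) (hpos 1) (hpos 2) (by linarith)
      hD hD1 hK1 hK2
  · rw [e2, f2]
    have hD := key (fun j => a j - a (j - 1)) 1
    have hD1 := key (fun j => a j - a (j - 1)) 0
    have hK1 := key (fun j => s * app j / a j - a j) 2
    have hK2 := key (fun j => s * app j / a j - a j) 0
    simp only [e0, e1] at hD hD1
    exact aux_drift s p _ _ (a 1) (a 2) (a 0) (app 2) (app 0) hs hp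
      (hpos 1) (hpos 2) (hpos 0) (by linarith)
      hD hD1 hK1 hK2
end

section
/- Fix reals s with 0 < s ≤ 1 and p with 0 < p ≤ s/18. Let aᵢ, aᵢ⁺⁺ : ℝ → ℝ (i ∈ {1,2,3}, indices cyclic mod 3) be a trajectory of the source-free oscillator dynamics (aᵢ' = p·aᵢ₋₁(aᵢ + aᵢ⁺⁺) − p·aᵢ(aᵢ₊₁ + aᵢ₊₁⁺⁺), (aᵢ⁺⁺)' = aᵢ² − s·aᵢ⁺⁺, aᵢ > 0, a₁+a₂+a₃ ≡ s, 0 ≤ aᵢ⁺⁺ ≤ aᵢ). Define κᵢ = s·aᵢ⁺⁺/aᵢ − aᵢ, κ = √(κ₁²+κ₂²+κ₃²), δᵢ = aᵢ − aᵢ₋₁, δ = √(δ₁²+δ₂²+δ₃²). Then at every time t with κ(t) > 0, the function κ is differentiable and κ'(t) ≤ −(s/2)·κ(t) + 18·p·δ(t). -/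
/-- Per-index bound: with `kc := s·app_c/a_c − a_c` and the literal derivative
`Ad = p·a_m(a_c+app_c) − p·a_c(a_n+app_n)`, we bound `2·kc·κ'` by the drift term. -/
lemma per_index (s p K dv am ac an apc apn Ad : ℝ)
    (hs : 0 < s)
    (ham : 0 < am) (hac : 0 < ac) (han : 0 < an)
    (hsum3 : am + ac + an = s)
    (hapc0 : 0 ≤ apc) (hapc1 : apc ≤ ac)
    (hp : 0 < p) (hK : 0 ≤ K) (hdv : 0 ≤ dv)
    (hAd : Ad = p * am * (ac + apc) - p * ac * (an + apn))
    (hkc : |s * apc / ac - ac| ≤ K)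
    (hkn : |s * apn / an - an| ≤ K)
    (hd1 : |ac - am| ≤ dv)
    (hd2 : |an - ac| ≤ dv) :
    2 * (s * apc / ac - ac) *
        (-s * (s * apc / ac - ac) - Ad / ac * ((s * apc / ac - ac) + 2 * ac))
      ≤ -2 * s * (s * apc / ac - ac) ^ 2 + 2 * K * (p * (4 * dv + K)) * (s + ac) := by
  set kc := s * apc / ac - ac with hkcdef
  set kn := s * apn / an - an with hkndef
  -- |Ad| ≤ p * ac * (4*dv + K)
  have hEs : s * Ad = p * ac * (s * (am - an) + (am * kc - an * kn) + (am * ac - an ^ 2)) := by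
    rw [hAd, hkcdef, hkndef]
    field_simp
    ring
  have habs1 : |am - an| ≤ 2 * dv := by
    have : am - an = -(ac - am) - (an - ac) := by ring
    rw [this]
    calc |(-(ac - am) - (an - ac))| ≤ |(-(ac-am))| + |an - ac| := abs_sub _ _
      _ ≤ dv + dv := by rw [abs_neg]; exact add_le_add hd1 hd2
      _ = 2 * dv := by ring
  have hmnle : am + an ≤ s := by linarith
  have habs2 : |am * kc - an * kn| ≤ s * K := by
    calc |am * kc - an * kn| ≤ |am * kc| + |an * kn| := abs_sub _ _
      _ = am * |kc| + an * |kn| := by rw [abs_mul, abs_mul, abs_of_pos ham, abs_of_pos han]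
      _ ≤ am * K + an * K := by
          exact add_le_add (mul_le_mul_of_nonneg_left hkc ham.le)
            (mul_le_mul_of_nonneg_left hkn han.le)
      _ ≤ s * K := by nlinarith
  have habs3 : |am * ac - an ^ 2| ≤ 2 * s * dv := by
    have h : am * ac - an ^ 2 = am * (-(an - ac)) + an * (am - an) := by ring
    rw [h]
    calc |am * (-(an - ac)) + an * (am - an)| ≤ |am * (-(an-ac))| + |an * (am - an)| := abs_add_le _ _
      _ = am * |an - ac| + an * |am - an| := by
          rw [abs_mul, abs_mul, abs_of_pos ham, abs_of_pos han, abs_neg]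
      _ ≤ am * dv + an * (2 * dv) := by
          exact add_le_add (mul_le_mul_of_nonneg_left hd2 ham.le)
            (mul_le_mul_of_nonneg_left habs1 han.le)
      _ ≤ 2 * s * dv := by nlinarith
  have hAdabs : |Ad| ≤ p * ac * (4 * dv + K) := by
    have h1 : |s * Ad| ≤ p * ac * (s * (4 * dv + K)) := by
      rw [hEs, abs_mul, abs_of_pos (by positivity : (0:ℝ) < p * ac)]
      have hE : |s * (am - an) + (am * kc - an * kn) + (am * ac - an ^ 2)|
          ≤ s * (2*dv) + s * K + 2 * s * dv := by
        calc |s * (am - an) + (am * kc - an * kn) + (am * ac - an ^ 2)|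
            ≤ |s * (am - an) + (am * kc - an * kn)| + |am * ac - an ^ 2| := abs_add_le _ _
          _ ≤ |s * (am - an)| + |am * kc - an * kn| + |am * ac - an ^ 2| := by
              exact add_le_add (abs_add_le _ _) le_rfl
          _ ≤ s * (2*dv) + s * K + 2 * s * dv := by
              refine add_le_add (add_le_add ?_ habs2) habs3
              rw [abs_mul, abs_of_pos hs]
              exact mul_le_mul_of_nonneg_left habs1 hs.le
      refine le_trans (mul_le_mul_of_nonneg_left hE (by positivity)) (le_of_eq (by ring))
    rw [abs_mul, abs_of_pos hs] at h1
    calc |Ad| = s * |Ad| / s := by field_simp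
      _ ≤ p * ac * (s * (4*dv+K)) / s := by
          exact div_le_div_of_nonneg_right h1 hs.le
      _ = p * ac * (4*dv+K) := by field_simp
  -- kc + 2ac ∈ [0, s + ac]
  have hc0 : 0 ≤ kc + 2 * ac := by
    have : 0 ≤ s * apc / ac := by positivity
    rw [hkcdef]; linarith
  have hc1 : kc + 2 * ac ≤ s + ac := by
    have : s * apc / ac ≤ s := by
      rw [div_le_iff₀ hac]
      nlinarith
    rw [hkcdef]; linarith
  -- core bound
  have hcore : |2 * kc * (Ad / ac * (kc + 2 * ac))| ≤ 2 * K * (p * (4*dv+K)) * (s + ac) := by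
    rw [abs_mul, abs_mul, abs_mul]
    have hAdac : |Ad / ac| ≤ p * (4*dv+K) := by
      rw [abs_div, abs_of_pos hac, div_le_iff₀ hac]
      calc |Ad| ≤ p * ac * (4*dv+K) := hAdabs
        _ = p * (4*dv+K) * ac := by ring
    have h2 : |(2:ℝ)| = 2 := by norm_num
    rw [h2, abs_of_nonneg hc0]
    have hb1 : (2:ℝ) * |kc| ≤ 2 * K := by linarith
    calc 2 * |kc| * (|Ad / ac| * (kc + 2*ac))
        ≤ 2 * K * ((p * (4*dv+K)) * (s + ac)) := by
          apply mul_le_mul hb1 (mul_le_mul hAdac hc1 hc0 (by positivity))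
            (by positivity) (by positivity)
      _ = 2 * K * (p * (4*dv+K)) * (s + ac) := by ring
  have hre : 2 * kc * (-s * kc - Ad / ac * (kc + 2 * ac))
      = -2 * s * kc ^ 2 - 2 * kc * (Ad / ac * (kc + 2 * ac)) := by ring
  rw [hre]
  linarith [neg_abs_le (2 * kc * (Ad / ac * (kc + 2 * ac))), hcore]

/-- Along a trajectory of the source-free oscillator dynamics with `p ≤ s/18`,
at every time with `κ(t) > 0` the function `κ = √(Σκᵢ²)` is differentiable and
`κ'(t) ≤ −(s/2)κ(t) + 18pδ(t)`. -/
theorem kappa_drift_bound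
    (s p : ℝ) (hs : 0 < s) (hs1 : s ≤ 1) (hp : 0 < p) (hp18 : p ≤ s / 18)
    (a app : ZMod 3 → ℝ → ℝ)
    (hpos : ∀ i t, 0 < a i t)
    (hsum : ∀ t, a 0 t + a 1 t + a 2 t = s)
    (happ : ∀ i t, 0 ≤ app i t ∧ app i t ≤ a i t)
    (hda : ∀ i t, HasDerivAt (a i)
      (p * a (i - 1) t * (a i t + app i t)
        - p * a i t * (a (i + 1) t + app (i + 1) t)) t)
    (hdapp : ∀ i t, HasDerivAt (app i) ((a i t) ^ 2 - s * app i t) t) :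
    ∀ t : ℝ,
      0 < Real.sqrt (∑ i : ZMod 3, (s * app i t / a i t - a i t) ^ 2) →
      DifferentiableAt ℝ
          (fun τ => Real.sqrt (∑ i : ZMod 3, (s * app i τ / a i τ - a i τ) ^ 2)) t ∧
        deriv (fun τ => Real.sqrt (∑ i : ZMod 3, (s * app i τ / a i τ - a i τ) ^ 2)) t
          ≤ -(s / 2) * Real.sqrt (∑ i : ZMod 3, (s * app i t / a i t - a i t) ^ 2)
            + 18 * p * Real.sqrt (∑ i : ZMod 3, (a i t - a (i - 1) t) ^ 2) := by
  intro t hκ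
  have hexp : ∀ g : ZMod 3 → ℝ, ∑ i : ZMod 3, g i = g 0 + g 1 + g 2 := by
    intro g
    exact Fin.sum_univ_three g
  have hFpos : 0 < ∑ i : ZMod 3, (s * app i t / a i t - a i t) ^ 2 :=
    Real.sqrt_pos.mp hκ
  set Ad : ZMod 3 → ℝ := fun i =>
    p * a (i - 1) t * (a i t + app i t) - p * a i t * (a (i + 1) t + app (i + 1) t)
    with hAdd
  -- derivative of each κ_i^2
  have hder : ∀ i : ZMod 3, HasDerivAt (fun τ => (s * app i τ / a i τ - a i τ) ^ 2)
      (2 * (s * app i t / a i t - a i t) *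
        (-s * (s * app i t / a i t - a i t)
          - Ad i / a i t * ((s * app i t / a i t - a i t) + 2 * a i t))) t := by
    intro i
    have hne : a i t ≠ 0 := (hpos i t).ne'
    have hdai : HasDerivAt (a i) (Ad i) t := by
      simp only [hAdd]; exact hda i t
    have h1 : HasDerivAt (fun τ => s * app i τ)
        (s * ((a i t) ^ 2 - s * app i t)) t := (hdapp i t).const_mul s
    have h2 := h1.div hdai hne
    have h3 := h2.sub hdai
    have h4 := h3.fun_pow 2
    convert h4 using 1
    · rfl
    · rfl
    · rfl
    push_cast
    simp only [Pi.sub_apply, Pi.div_apply]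
    field_simp
    ring
  have hF : HasDerivAt (fun τ => ∑ i : ZMod 3, (s * app i τ / a i τ - a i τ) ^ 2)
      (∑ i : ZMod 3, 2 * (s * app i t / a i t - a i t) *
        (-s * (s * app i t / a i t - a i t)
          - Ad i / a i t * ((s * app i t / a i t - a i t) + 2 * a i t))) t :=
    HasDerivAt.fun_sum fun i _ => hder i
  have hsqrt : HasDerivAt (fun τ => Real.sqrt (∑ i : ZMod 3, (s * app i τ / a i τ - a i τ) ^ 2))
      (1 / (2 * Real.sqrt (∑ i : ZMod 3, (s * app i t / a i t - a i t) ^ 2)) *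
        (∑ i : ZMod 3, 2 * (s * app i t / a i t - a i t) *
          (-s * (s * app i t / a i t - a i t)
            - Ad i / a i t * ((s * app i t / a i t - a i t) + 2 * a i t)))) t :=
    (Real.hasDerivAt_sqrt hFpos.ne').comp t hF
  refine ⟨hsqrt.differentiableAt, ?_⟩
  rw [hsqrt.deriv]
  set K := Real.sqrt (∑ i : ZMod 3, (s * app i t / a i t - a i t) ^ 2) with hKdef
  set dv := Real.sqrt (∑ i : ZMod 3, (a i t - a (i - 1) t) ^ 2) with hdvdef
  have hK0 : 0 < K := hκ
  have hdv0 : 0 ≤ dv := Real.sqrt_nonneg _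
  have hK2 : K ^ 2 = ∑ i : ZMod 3, (s * app i t / a i t - a i t) ^ 2 :=
    Real.sq_sqrt hFpos.le
  have hk_le : ∀ i : ZMod 3, |s * app i t / a i t - a i t| ≤ K := by
    intro i
    have h1 : (s * app i t / a i t - a i t) ^ 2
        ≤ ∑ j : ZMod 3, (s * app j t / a j t - a j t) ^ 2 :=
      Finset.single_le_sum (f := fun j => (s * app j t / a j t - a j t) ^ 2)
        (fun j _ => sq_nonneg _) (Finset.mem_univ i)
    calc |s * app i t / a i t - a i t|
        = Real.sqrt ((s * app i t / a i t - a i t) ^ 2) := (Real.sqrt_sq_eq_abs _).symm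
      _ ≤ K := Real.sqrt_le_sqrt h1
  have hd_le : ∀ i : ZMod 3, |a i t - a (i - 1) t| ≤ dv := by
    intro i
    have h1 : (a i t - a (i - 1) t) ^ 2 ≤ ∑ j : ZMod 3, (a j t - a (j - 1) t) ^ 2 :=
      Finset.single_le_sum (f := fun j => (a j t - a (j - 1) t) ^ 2)
        (fun j _ => sq_nonneg _) (Finset.mem_univ i)
    calc |a i t - a (i - 1) t|
        = Real.sqrt ((a i t - a (i - 1) t) ^ 2) := (Real.sqrt_sq_eq_abs _).symm
      _ ≤ dv := Real.sqrt_le_sqrt h1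
  have hsum3 : ∀ i : ZMod 3, a (i - 1) t + a i t + a (i + 1) t = s := by
    intro i
    have h := hsum t
    have h3 : ∀ j : ZMod 3, j = 0 ∨ j = 1 ∨ j = 2 := by decide
    rcases h3 i with rfl | rfl | rfl
    · rw [(by decide : (0 : ZMod 3) - 1 = 2), (by decide : (0 : ZMod 3) + 1 = 1)]; linarith
    · rw [(by decide : (1 : ZMod 3) - 1 = 0), (by decide : (1 : ZMod 3) + 1 = 2)]; linarith
    · rw [(by decide : (2 : ZMod 3) - 1 = 1), (by decide : (2 : ZMod 3) + 1 = 0)]; linarith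
  have hb : ∀ i : ZMod 3,
      2 * (s * app i t / a i t - a i t) *
        (-s * (s * app i t / a i t - a i t)
          - Ad i / a i t * ((s * app i t / a i t - a i t) + 2 * a i t))
      ≤ -2 * s * (s * app i t / a i t - a i t) ^ 2
          + 2 * K * (p * (4 * dv + K)) * (s + a i t) := by
    intro i
    have hd2' : |a (i + 1) t - a i t| ≤ dv := by
      have := hd_le (i + 1)
      rwa [add_sub_cancel_right] at this
    exact per_index s p K dv (a (i - 1) t) (a i t) (a (i + 1) t) (app i t) (app (i + 1) t)
      (Ad i) hs (hpos _ t) (hpos _ t) (hpos _ t) (hsum3 i) (happ i t).1 (happ i t).2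
      hp hK0.le hdv0 (by simp only [hAdd]) (hk_le i) (hk_le (i + 1)) (hd_le i) hd2'
  -- sum the three bounds
  set D := ∑ i : ZMod 3, 2 * (s * app i t / a i t - a i t) *
      (-s * (s * app i t / a i t - a i t)
        - Ad i / a i t * ((s * app i t / a i t - a i t) + 2 * a i t)) with hDdef
  have hDle : D ≤ -2 * s * K ^ 2 + 2 * K * (p * (4 * dv + K)) * (4 * s) := by
    rw [hDdef, hexp]
    have h0 := hb 0
    have h1 := hb 1
    have h2 := hb 2
    have hKs : K ^ 2 = (s * app 0 t / a 0 t - a 0 t) ^ 2 + (s * app 1 t / a 1 t - a 1 t) ^ 2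
        + (s * app 2 t / a 2 t - a 2 t) ^ 2 := by rw [hK2, hexp]
    have hst := hsum t
    have hCs : 2 * K * (p * (4 * dv + K)) * (s + a 0 t)
        + 2 * K * (p * (4 * dv + K)) * (s + a 1 t)
        + 2 * K * (p * (4 * dv + K)) * (s + a 2 t)
        = 2 * K * (p * (4 * dv + K)) * (4 * s) := by
      linear_combination (2 * K * (p * (4 * dv + K))) * hst
    have hKs2 : -2 * s * K ^ 2 = -2 * s * ((s * app 0 t / a 0 t - a 0 t) ^ 2
        + (s * app 1 t / a 1 t - a 1 t) ^ 2 + (s * app 2 t / a 2 t - a 2 t) ^ 2) := by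
      linear_combination (-2 * s) * hKs
    linarith [h0, h1, h2, hCs, hKs2]
  have hD2 : D ≤ -s * K ^ 2 + 36 * p * dv * K := by
    have h8 : 8 * p ≤ 1 := by nlinarith
    have hA : 8 * (p * s) * K ^ 2 ≤ s * K ^ 2 := by
      nlinarith [mul_nonneg (by linarith : (0:ℝ) ≤ 1 - 8 * p)
        (mul_nonneg hs.le (sq_nonneg K))]
    have hB : 32 * (p * s) * (K * dv) ≤ 36 * p * (dv * K) := by
      nlinarith [mul_nonneg (mul_nonneg (by linarith : (0:ℝ) ≤ 36 - 32 * s) hp.le)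
        (mul_nonneg hK0.le hdv0)]
    nlinarith [hDle, hA, hB]
  calc 1 / (2 * K) * D ≤ 1 / (2 * K) * (-s * K ^ 2 + 36 * p * dv * K) := by
        apply mul_le_mul_of_nonneg_left hD2 (by positivity)
    _ = -(s / 2) * K + 18 * p * dv := by field_simp; ring
end

section
/- Fix a real s > 0 and reals a₁, a₂, a₃ > 0 with a₁+a₂+a₃ = s. Define δᵢ = aᵢ − aᵢ₋₁ (indices cyclic mod 3), δ = √(δ₁²+δ₂²+δ₃²), and η = √(−Σᵢ₌₁³ ln(aᵢ/(s/3))) (the quantity under the square root is nonnegative by AM–GM). If 0 < δ ≤ s/12, then δ/s < η < (3/2)·(δ/s); equivalently, δ ∈ ((2/3)·s·η, s·η). -/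
open Real Set

lemma deriv_low (x : ℝ) (hx : -1 < x) :
    HasDerivAt (fun y : ℝ => y - y^2/3 - Real.log (1+y)) (1 - 2*x/3 - 1/(1+x)) x := by
  have h1x : (1:ℝ)+x ≠ 0 := by linarith
  have hlog : HasDerivAt (fun y : ℝ => Real.log (1+y)) (1/(1+x)) x := by
    have := (Real.hasDerivAt_log h1x).comp x ((hasDerivAt_const x (1:ℝ)).add (hasDerivAt_id x))
    simpa [one_div, Function.comp_def] using this
  have := ((hasDerivAt_id x).sub ((hasDerivAt_pow 2 x).div_const 3)).sub hlog
  exact this.congr_deriv (by norm_num)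

lemma log_lt_low {t : ℝ} (h1 : -1 < t) (h2 : t < 1/2) (h0 : t ≠ 0) :
    Real.log (1+t) < t - t^2/3 := by
  set f : ℝ → ℝ := fun y => y - y^2/3 - Real.log (1+y) with hf
  have key : 0 < f t := by
    rcases lt_or_gt_of_ne h0 with ht | ht
    · -- t < 0 : f strictly anti on Icc t 0
      have hanti : StrictAntiOn f (Icc t 0) := by
        apply strictAntiOn_of_deriv_neg (convex_Icc t 0)
        · apply ContinuousOn.sub (ContinuousOn.sub (continuousOn_id) ?_) ?_
          · exact (continuousOn_id.pow 2).div_const 3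
          · apply ContinuousOn.log (continuousOn_const.add continuousOn_id)
            intro x hx; simp only [mem_Icc] at hx; simp only [Pi.add_apply, id]; linarith [hx.1]
        · intro x hx
          rw [interior_Icc, mem_Ioo] at hx
          have hx1 : -1 < x := by linarith [hx.1]
          rw [(deriv_low x hx1).deriv]
          have h1x : (0:ℝ) < 1+x := by linarith
          have : 1 - 2*x/3 < 1/(1+x) := by
            rw [lt_div_iff₀ h1x]; nlinarith [hx.1, hx.2, sq_nonneg x]
          linarith
      have := hanti (mem_Icc.mpr ⟨le_refl t, ht.le⟩) (mem_Icc.mpr ⟨ht.le, le_refl 0⟩) ht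
      simpa [hf] using this
    · -- t > 0 : f strictly mono on Icc 0 t
      have hmono : StrictMonoOn f (Icc 0 t) := by
        apply strictMonoOn_of_deriv_pos (convex_Icc 0 t)
        · apply ContinuousOn.sub (ContinuousOn.sub (continuousOn_id) ?_) ?_
          · exact (continuousOn_id.pow 2).div_const 3
          · apply ContinuousOn.log (continuousOn_const.add continuousOn_id)
            intro x hx; simp only [mem_Icc] at hx; simp only [Pi.add_apply, id]; linarith [hx.1]
        · intro x hx
          rw [interior_Icc, mem_Ioo] at hx
          have hx1 : -1 < x := by linarith [hx.1]
          rw [(deriv_low x hx1).deriv]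
          have h1x : (0:ℝ) < 1+x := by linarith [hx.1]
          have : 1/(1+x) < 1 - 2*x/3 := by
            rw [div_lt_iff₀ h1x]; nlinarith [hx.1, hx.2]
          linarith
      have := hmono (mem_Icc.mpr ⟨le_refl 0, ht.le⟩) (mem_Icc.mpr ⟨ht.le, le_refl t⟩) ht
      simpa [hf] using this
  simp only [hf] at key; linarith

lemma deriv_up (x : ℝ) (hx : -1 < x) :
    HasDerivAt (fun y : ℝ => Real.log (1+y) - y + 3/4*y^2) (1/(1+x) - 1 + 3/2*x) x := by
  have h1x : (1:ℝ)+x ≠ 0 := by linarith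
  have hlog : HasDerivAt (fun y : ℝ => Real.log (1+y)) (1/(1+x)) x := by
    have := (Real.hasDerivAt_log h1x).comp x ((hasDerivAt_const x (1:ℝ)).add (hasDerivAt_id x))
    simpa [one_div, Function.comp_def] using this
  have := (hlog.sub (hasDerivAt_id x)).add ((hasDerivAt_pow 2 x).const_mul (3/4 : ℝ))
  exact this.congr_deriv (by norm_num; ring)

lemma log_gt_up {t : ℝ} (h1 : -1/3 < t) (h0 : t ≠ 0) :
    t - 3/4*t^2 < Real.log (1+t) := by
  set g : ℝ → ℝ := fun y => Real.log (1+y) - y + 3/4*y^2 with hg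
  have hcont : ∀ u v : ℝ, -1 < u → ContinuousOn g (Icc u v) ∨ True := fun _ _ _ => Or.inr trivial
  have key : 0 < g t := by
    rcases lt_or_gt_of_ne h0 with ht | ht
    · have hanti : StrictAntiOn g (Icc t 0) := by
        apply strictAntiOn_of_deriv_neg (convex_Icc t 0)
        · apply ContinuousOn.add (ContinuousOn.sub ?_ continuousOn_id) ?_
          · apply ContinuousOn.log (continuousOn_const.add continuousOn_id)
            intro x hx; simp only [mem_Icc] at hx; simp only [Pi.add_apply, id]; linarith [hx.1]
          · exact (continuousOn_id.pow 2).const_smul (3/4 : ℝ)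
        · intro x hx
          rw [interior_Icc, mem_Ioo] at hx
          have hx1 : (-1:ℝ) < x := by linarith [hx.1]
          rw [(deriv_up x hx1).deriv]
          have h1x : (0:ℝ) < 1+x := by linarith
          have : 1/(1+x) < 1 - 3/2*x := by
            rw [div_lt_iff₀ h1x]; nlinarith [hx.1, hx.2]
          linarith
      have := hanti (mem_Icc.mpr ⟨le_refl t, ht.le⟩) (mem_Icc.mpr ⟨ht.le, le_refl 0⟩) ht
      simpa [hg] using this
    · have hmono : StrictMonoOn g (Icc 0 t) := by
        apply strictMonoOn_of_deriv_pos (convex_Icc 0 t)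
        · apply ContinuousOn.add (ContinuousOn.sub ?_ continuousOn_id) ?_
          · apply ContinuousOn.log (continuousOn_const.add continuousOn_id)
            intro x hx; simp only [mem_Icc] at hx; simp only [Pi.add_apply, id]; linarith [hx.1]
          · exact (continuousOn_id.pow 2).const_smul (3/4 : ℝ)
        · intro x hx
          rw [interior_Icc, mem_Ioo] at hx
          have hx1 : (-1:ℝ) < x := by linarith [hx.1]
          rw [(deriv_up x hx1).deriv]
          have h1x : (0:ℝ) < 1+x := by linarith [hx.1]
          have : 1 - 3/2*x < 1/(1+x) := by
            rw [lt_div_iff₀ h1x]; nlinarith [hx.1]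
          linarith
      have := hmono (mem_Icc.mpr ⟨le_refl 0, ht.le⟩) (mem_Icc.mpr ⟨ht.le, le_refl t⟩) ht
      simpa [hg] using this
  simp only [hg] at key; linarith


lemma nonstrict_low {t : ℝ} (h1 : -1/4 ≤ t) (h2 : t ≤ 1/4) :
    Real.log (1+t) ≤ t - t^2/3 := by
  rcases eq_or_ne t 0 with rfl | h0
  · norm_num
  · exact (log_lt_low (by linarith) (by linarith) h0).le

lemma nonstrict_up {t : ℝ} (h1 : -1/4 ≤ t) :
    t - 3/4*t^2 ≤ Real.log (1+t) := by
  rcases eq_or_ne t 0 with rfl | h0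
  · norm_num
  · exact (log_gt_up (by linarith) h0).le

lemma key (x y z : ℝ)
    (hsum : x + y + z = 3)
    (hb : (x-1)^2 + (y-1)^2 + (z-1)^2 ≤ 1/16)
    (hne : ¬ (x = 1 ∧ y = 1 ∧ z = 1)) :
    ((x-1)^2+(y-1)^2+(z-1)^2)/3 < -(Real.log x + Real.log y + Real.log z) ∧
    -(Real.log x + Real.log y + Real.log z) < 3/4*((x-1)^2+(y-1)^2+(z-1)^2) := by
  have hbx : -1/4 ≤ x-1 ∧ x-1 ≤ 1/4 := by constructor <;> nlinarith [sq_nonneg (y-1), sq_nonneg (z-1)]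
  have hby : -1/4 ≤ y-1 ∧ y-1 ≤ 1/4 := by constructor <;> nlinarith [sq_nonneg (x-1), sq_nonneg (z-1)]
  have hbz : -1/4 ≤ z-1 ∧ z-1 ≤ 1/4 := by constructor <;> nlinarith [sq_nonneg (x-1), sq_nonneg (y-1)]
  have ex : (1:ℝ) + (x-1) = x := by ring
  have ey : (1:ℝ) + (y-1) = y := by ring
  have ez : (1:ℝ) + (z-1) = z := by ring
  have hone : x ≠ 1 ∨ y ≠ 1 ∨ z ≠ 1 := by
    by_contra h; push_neg at h; exact hne ⟨h.1, h.2.1, h.2.2⟩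
  have Lx := nonstrict_low hbx.1 hbx.2; rw [ex] at Lx
  have Ly := nonstrict_low hby.1 hby.2; rw [ey] at Ly
  have Lz := nonstrict_low hbz.1 hbz.2; rw [ez] at Lz
  have Ux := nonstrict_up hbx.1; rw [ex] at Ux
  have Uy := nonstrict_up hby.1; rw [ey] at Uy
  have Uz := nonstrict_up hbz.1; rw [ez] at Uz
  rcases hone with h | h | h
  · have h0 : x - 1 ≠ 0 := sub_ne_zero.mpr h
    have SL := log_lt_low (t := x-1) (by linarith [hbx.1]) (by linarith [hbx.2]) h0
    have SU := log_gt_up (t := x-1) (by linarith [hbx.1]) h0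
    rw [ex] at SL SU
    constructor <;> linarith
  · have h0 : y - 1 ≠ 0 := sub_ne_zero.mpr h
    have SL := log_lt_low (t := y-1) (by linarith [hby.1]) (by linarith [hby.2]) h0
    have SU := log_gt_up (t := y-1) (by linarith [hby.1]) h0
    rw [ey] at SL SU
    constructor <;> linarith
  · have h0 : z - 1 ≠ 0 := sub_ne_zero.mpr h
    have SL := log_lt_low (t := z-1) (by linarith [hbz.1]) (by linarith [hbz.2]) h0
    have SU := log_gt_up (t := z-1) (by linarith [hbz.1]) h0
    rw [ez] at SL SU
    constructor <;> linarith


/-- For `a₁+a₂+a₃ = s`, `η = √(−Σ ln(aᵢ/(s/3)))` and `δ = √(Σ(aᵢ−aᵢ₋₁)²)`: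
if `0 < δ ≤ s/12` then `δ/s < η < (3/2)(δ/s)`. -/
theorem eta_delta_relation
    (s : ℝ) (hs : 0 < s)
    (a : ZMod 3 → ℝ)
    (hpos : ∀ i, 0 < a i)
    (hsum : a 0 + a 1 + a 2 = s)
    (hδpos : 0 < Real.sqrt (∑ i : ZMod 3, (a i - a (i - 1)) ^ 2))
    (hδ : Real.sqrt (∑ i : ZMod 3, (a i - a (i - 1)) ^ 2) ≤ s / 12) :
    Real.sqrt (∑ i : ZMod 3, (a i - a (i - 1)) ^ 2) / s
        < Real.sqrt (-(∑ i : ZMod 3, Real.log (a i / (s / 3)))) ∧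
      Real.sqrt (-(∑ i : ZMod 3, Real.log (a i / (s / 3))))
        < 3 / 2 * (Real.sqrt (∑ i : ZMod 3, (a i - a (i - 1)) ^ 2) / s) := by
  have hsum3 : ∀ f : ZMod 3 → ℝ, ∑ i, f i = f 0 + f 1 + f 2 := by
    intro f
    rw [show (Finset.univ : Finset (ZMod 3)) = {0, 1, 2} from by decide]
    rw [Finset.sum_insert (by decide), Finset.sum_insert (by decide), Finset.sum_singleton]
    ring
  have h01 : ((0:ZMod 3) - 1) = 2 := by decide
  have h11 : ((1:ZMod 3) - 1) = 0 := by decide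
  have h21 : ((2:ZMod 3) - 1) = 1 := by decide
  set Δ : ℝ := ∑ i : ZMod 3, (a i - a (i - 1)) ^ 2 with hΔdef
  have hΔ : Δ = (a 0 - a 2)^2 + (a 1 - a 0)^2 + (a 2 - a 1)^2 := by
    rw [hΔdef, hsum3]; rw [h01, h11, h21]
  set x := a 0 / (s/3) with hxdef
  set y := a 1 / (s/3) with hydef
  set z := a 2 / (s/3) with hzdef
  have hE : -(∑ i : ZMod 3, Real.log (a i / (s / 3))) = -(Real.log x + Real.log y + Real.log z) := by
    rw [hsum3]
  have hs' : s ≠ 0 := ne_of_gt hs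
  have hxyz : x + y + z = 3 := by
    rw [hxdef, hydef, hzdef]; field_simp; linarith
  -- T in terms of Δ
  have hT : (x-1)^2 + (y-1)^2 + (z-1)^2 = 3 * Δ / s^2 := by
    rw [hxdef, hydef, hzdef, hΔ]; field_simp; ring_nf
    nlinarith [hsum, sq_nonneg s]
  have hΔnonneg : 0 ≤ Δ := by rw [hΔ]; positivity
  have hΔpos' : 0 < Δ := Real.sqrt_pos.mp hδpos
  have hΔle : Δ ≤ (s/12)^2 := by
    have := pow_le_pow_left₀ (Real.sqrt_nonneg Δ) hδ 2
    rwa [Real.sq_sqrt hΔnonneg] at this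
  have hb : (x-1)^2 + (y-1)^2 + (z-1)^2 ≤ 1/16 := by
    rw [hT, div_le_div_iff₀ (by positivity) (by norm_num)]
    nlinarith
  have hne : ¬ (x = 1 ∧ y = 1 ∧ z = 1) := by
    rintro ⟨h1, h2, h3⟩
    rw [hxdef, div_eq_one_iff_eq (by positivity)] at h1
    rw [hydef, div_eq_one_iff_eq (by positivity)] at h2
    rw [hzdef, div_eq_one_iff_eq (by positivity)] at h3
    rw [hΔ, h1, h2, h3] at hΔpos'
    simp at hΔpos'
  obtain ⟨Klo, Khi⟩ := key x y z hxyz hb hne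
  rw [hT] at Klo Khi
  constructor
  · rw [hE]
    rw [Real.lt_sqrt (div_nonneg (Real.sqrt_nonneg _) hs.le)]
    rw [div_pow, Real.sq_sqrt hΔnonneg]
    have hs2 : (0:ℝ) < s^2 := by positivity
    calc Δ / s^2 = 3 * Δ / s^2 / 3 := by ring
    _ < _ := Klo
  · rw [hE]
    have hrhs : 0 < 3 / 2 * (Real.sqrt Δ / s) := by positivity
    rw [Real.sqrt_lt' hrhs]
    have : (3/2 * (Real.sqrt Δ / s))^2 = 3/4 * (3 * Δ / s^2) := by
      rw [mul_pow, div_pow, div_pow, Real.sq_sqrt hΔnonneg]; ring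
    rw [this]
    exact Khi
end

section
/- Fix reals s with 0 < s ≤ 1 and p > 0. Let aᵢ, aᵢ⁺⁺ : ℝ → ℝ (i ∈ {1,2,3}, indices cyclic mod 3) be a trajectory of the source-free oscillator dynamics (aᵢ' = p·aᵢ₋₁(aᵢ + aᵢ⁺⁺) − p·aᵢ(aᵢ₊₁ + aᵢ₊₁⁺⁺), (aᵢ⁺⁺)' = aᵢ² − s·aᵢ⁺⁺, aᵢ > 0, a₁+a₂+a₃ ≡ s, 0 ≤ aᵢ⁺⁺ ≤ aᵢ). Define κᵢ = s·aᵢ⁺⁺/aᵢ − aᵢ, κ = √(Σκᵢ²), δᵢ = aᵢ − aᵢ₋₁, δ = √(Σδᵢ²), and η = √(ln(s³/27) − ln(a₁a₂a₃)). Then at every time t with δ(t) ≤ s/12 and η(t) > 0, the function η is differentiable at t and η'(t) ≥ (p·s/9)·η(t) − (p/2)·κ(t). -/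
set_option maxHeartbeats 1000000

lemma osc_log_quad_upper {u : ℝ} (h1 : -(1/6) ≤ u) (h2 : u ≤ 1/6) :
    Real.log (1 + u) ≤ u - u^2/3 := by
  set f : ℝ → ℝ := fun x => x - x^2/3 - Real.log (1+x) with hf
  have hd : ∀ x : ℝ, -(1/2) ≤ x → HasDerivAt f (1 - 2*x/3 - 1/(1+x)) x := by
    intro x hx
    have h1x : (1:ℝ) + x ≠ 0 := by norm_num; nlinarith
    have hlog : HasDerivAt (fun y : ℝ => Real.log (1+y)) (1/(1+x)) x := by
      simpa using ((hasDerivAt_id x).const_add 1).log h1x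
    have hpow : HasDerivAt (fun y : ℝ => y - y^2/3) (1 - 2*x/3) x := by
      have := (hasDerivAt_id x).sub ((hasDerivAt_pow 2 x).div_const 3)
      exact this.congr_deriv (by push_cast; ring)
    exact hpow.sub hlog
  have hmono : MonotoneOn f (Set.Icc (0:ℝ) (1/6)) := by
    apply monotoneOn_of_deriv_nonneg (convex_Icc _ _)
    · intro x hx; exact (hd x (by linarith [hx.1])).continuousAt.continuousWithinAt
    · intro x hx; rw [interior_Icc] at hx
      exact (hd x (by linarith [hx.1])).differentiableAt.differentiableWithinAt
    · intro x hx; rw [interior_Icc] at hx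
      rw [(hd x (by linarith [hx.1])).deriv]
      have h1x : (0:ℝ) < 1 + x := by linarith [hx.1]
      rw [sub_nonneg, div_le_iff₀ h1x]
      nlinarith [hx.1, hx.2]
  have hanti : AntitoneOn f (Set.Icc (-(1/6):ℝ) 0) := by
    apply antitoneOn_of_deriv_nonpos (convex_Icc _ _)
    · intro x hx; exact (hd x (by linarith [hx.1])).continuousAt.continuousWithinAt
    · intro x hx; rw [interior_Icc] at hx
      exact (hd x (by linarith [hx.1])).differentiableAt.differentiableWithinAt
    · intro x hx; rw [interior_Icc] at hx
      rw [(hd x (by linarith [hx.1])).deriv]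
      have h1x : (0:ℝ) < 1 + x := by linarith [hx.1]
      rw [sub_nonpos, le_div_iff₀ h1x]
      nlinarith [hx.1, hx.2]
  have hf0 : f 0 = 0 := by simp [hf]
  rcases le_or_gt 0 u with hu | hu
  · have := hmono (Set.mem_Icc.2 ⟨le_refl 0, by norm_num⟩) (Set.mem_Icc.2 ⟨hu, h2⟩) hu
    rw [hf0] at this; simp only [hf] at this; linarith
  · have := hanti (Set.mem_Icc.2 ⟨h1, hu.le⟩) (Set.mem_Icc.2 ⟨by norm_num, le_refl 0⟩) hu.le
    rw [hf0] at this; simp only [hf] at this; linarith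

lemma osc_log_quad_lower {u : ℝ} (h1 : -(1/6) ≤ u) (h2 : u ≤ 1/6) :
    u - (3/4)*u^2 ≤ Real.log (1 + u) := by
  set f : ℝ → ℝ := fun x => Real.log (1+x) - x + (3/4)*x^2 with hf
  have hd : ∀ x : ℝ, -(1/2) ≤ x → HasDerivAt f (1/(1+x) - 1 + (3/2)*x) x := by
    intro x hx
    have h1x : (1:ℝ) + x ≠ 0 := by norm_num; nlinarith
    have hlog : HasDerivAt (fun y : ℝ => Real.log (1+y)) (1/(1+x)) x := by
      simpa using ((hasDerivAt_id x).const_add 1).log h1x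
    have hpow : HasDerivAt (fun y : ℝ => -y + (3/4)*y^2) (-1 + (3/2)*x) x := by
      have := ((hasDerivAt_id x).neg).add (((hasDerivAt_pow 2 x)).const_mul (3/4:ℝ))
      exact this.congr_deriv (by push_cast; ring)
    have := hlog.add hpow
    have e : f = fun y => Real.log (1+y) + (-y + (3/4)*y^2) := by
      funext y; simp only [hf]; ring
    rw [e]; exact this.congr_deriv (by ring)
  have hmono : MonotoneOn f (Set.Icc (0:ℝ) (1/6)) := by
    apply monotoneOn_of_deriv_nonneg (convex_Icc _ _)
    · intro x hx; exact (hd x (by linarith [hx.1])).continuousAt.continuousWithinAt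
    · intro x hx; rw [interior_Icc] at hx
      exact (hd x (by linarith [hx.1])).differentiableAt.differentiableWithinAt
    · intro x hx; rw [interior_Icc] at hx
      rw [(hd x (by linarith [hx.1])).deriv]
      have h1x : (0:ℝ) < 1 + x := by linarith [hx.1]
      have : 1 - (3/2)*x ≤ 1/(1+x) := by
        rw [le_div_iff₀ h1x]; nlinarith [hx.1, hx.2]
      linarith
  have hanti : AntitoneOn f (Set.Icc (-(1/6):ℝ) 0) := by
    apply antitoneOn_of_deriv_nonpos (convex_Icc _ _)
    · intro x hx; exact (hd x (by linarith [hx.1])).continuousAt.continuousWithinAt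
    · intro x hx; rw [interior_Icc] at hx
      exact (hd x (by linarith [hx.1])).differentiableAt.differentiableWithinAt
    · intro x hx; rw [interior_Icc] at hx
      rw [(hd x (by linarith [hx.1])).deriv]
      have h1x : (0:ℝ) < 1 + x := by linarith [hx.1]
      have : 1/(1+x) ≤ 1 - (3/2)*x := by
        rw [div_le_iff₀ h1x]; nlinarith [hx.1, hx.2]
      linarith
  have hf0 : f 0 = 0 := by simp [hf]
  rcases le_or_gt 0 u with hu | hu
  · have := hmono (Set.mem_Icc.2 ⟨le_refl 0, by norm_num⟩) (Set.mem_Icc.2 ⟨hu, h2⟩) hu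
    rw [hf0] at this; simp only [hf] at this; linarith
  · have := hanti (Set.mem_Icc.2 ⟨h1, hu.le⟩) (Set.mem_Icc.2 ⟨by norm_num, le_refl 0⟩) hu.le
    rw [hf0] at this; simp only [hf] at this; linarith

lemma osc_sum3 (f : ZMod 3 → ℝ) : ∑ i, f i = f 0 + f 1 + f 2 := by
  exact Fin.sum_univ_three f

lemma osc_s1_lb (D K d0 d1 d2 k0 k1 k2 : ℝ) (hD2 : D^2 = d0^2 + d1^2 + d2^2)
    (hK2 : K^2 = k0^2 + k1^2 + k2^2) (hD0 : 0 ≤ D) (hK0 : 0 ≤ K) :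
    -(D*K) ≤ d0*k0 + d1*k1 + d2*k2 := by
  have hCS : (d0*k0 + d1*k1 + d2*k2)^2 ≤ D^2 * K^2 := by
    rw [hD2, hK2]
    nlinarith [sq_nonneg (d0*k1 - d1*k0), sq_nonneg (d0*k2 - d2*k0), sq_nonneg (d1*k2 - d2*k1)]
  nlinarith [mul_nonneg hD0 hK0, sq_nonneg (d0*k0 + d1*k1 + d2*k2 + D*K), hCS]

lemma osc_delta_bounds (s D d0 d1 d2 : ℝ) (hs : 0 < s) (hD2 : D^2 = d0^2 + d1^2 + d2^2)
    (hD0 : 0 ≤ D) (hδ : D ≤ s/12) :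
    (-(s/12) ≤ d0 ∧ d0 ≤ s/12) ∧ (-(s/12) ≤ d1 ∧ d1 ≤ s/12)
      ∧ (-(s/12) ≤ d2 ∧ d2 ≤ s/12) := by
  have h144 : D^2 ≤ (s/12)^2 := by nlinarith
  have hb : (0:ℝ) ≤ s/12 := by linarith
  refine ⟨abs_le_of_sq_le_sq' (by nlinarith [sq_nonneg d1, sq_nonneg d2]) hb,
    abs_le_of_sq_le_sq' (by nlinarith [sq_nonneg d0, sq_nonneg d2]) hb,
    abs_le_of_sq_le_sq' (by nlinarith [sq_nonneg d0, sq_nonneg d1]) hb⟩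

lemma osc_sq1 (s Q T E2 : ℝ) (h1 : s^2*Q = 3*T) (h2 : Q/3 ≤ E2) : T ≤ s^2*E2 := by
  nlinarith [sq_nonneg s]

lemma osc_sq2 (s Q T E2 : ℝ) (h1 : s^2*Q = 3*T) (h2 : E2 ≤ (3/4)*Q) : s^2*E2 ≤ 9/4*T := by
  nlinarith [sq_nonneg s]

lemma osc_final (p s E K D S1 T : ℝ) (hp : 0 < p) (hK0 : 0 ≤ K) (hD0 : 0 ≤ D)
    (hsE : 0 ≤ s*E) (hD2 : D^2 = T) (hS1 : -(D*K) ≤ S1) (hDsE : D ≤ s*E)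
    (hsED : 2/3*(s*E) ≤ D) :
    (p * s / 9 * E - p / 2 * K) * (2 * E) * s ≤ p * (S1 + T/2) := by
  nlinarith [mul_nonneg hp.le (by linarith : (0:ℝ) ≤ S1 + D*K),
    mul_nonneg hp.le (mul_nonneg hK0 (by linarith : (0:ℝ) ≤ s*E - D)),
    mul_nonneg hp.le (mul_nonneg (by linarith : (0:ℝ) ≤ D - 2/3*(s*E))
      (by linarith : (0:ℝ) ≤ D + 2/3*(s*E)))]

/-- Along a trajectory of the source-free oscillator dynamics, at every time
with `δ(t) ≤ s/12` and `η(t) > 0`, the potential `η = √(ln(s³/27) − ln(a₁a₂a₃))`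
is differentiable and `η'(t) ≥ (ps/9)η(t) − (p/2)κ(t)`. -/
theorem eta_drift_bound
    (s p : ℝ) (hs : 0 < s) (hs1 : s ≤ 1) (hp : 0 < p)
    (a app : ZMod 3 → ℝ → ℝ)
    (hpos : ∀ i t, 0 < a i t)
    (hsum : ∀ t, a 0 t + a 1 t + a 2 t = s)
    (happ : ∀ i t, 0 ≤ app i t ∧ app i t ≤ a i t)
    (hda : ∀ i t, HasDerivAt (a i)
      (p * a (i - 1) t * (a i t + app i t)
        - p * a i t * (a (i + 1) t + app (i + 1) t)) t)
    (hdapp : ∀ i t, HasDerivAt (app i) ((a i t) ^ 2 - s * app i t) t) :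
    ∀ t : ℝ,
      Real.sqrt (∑ i : ZMod 3, (a i t - a (i - 1) t) ^ 2) ≤ s / 12 →
      0 < Real.sqrt (Real.log (s ^ 3 / 27) - Real.log (a 0 t * a 1 t * a 2 t)) →
      DifferentiableAt ℝ
          (fun τ => Real.sqrt (Real.log (s ^ 3 / 27) - Real.log (a 0 τ * a 1 τ * a 2 τ))) t ∧
        deriv (fun τ => Real.sqrt (Real.log (s ^ 3 / 27) - Real.log (a 0 τ * a 1 τ * a 2 τ))) t
          ≥ p * s / 9 * Real.sqrt (Real.log (s ^ 3 / 27) - Real.log (a 0 t * a 1 t * a 2 t))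
            - p / 2 * Real.sqrt (∑ i : ZMod 3, (s * app i t / a i t - a i t) ^ 2) := by
  intro t hδ hη
  have hA0 : (0:ℝ) < a 0 t := hpos 0 t
  have hA1 : (0:ℝ) < a 1 t := hpos 1 t
  have hA2 : (0:ℝ) < a 2 t := hpos 2 t
  have hPi : (0:ℝ) < a 0 t * a 1 t * a 2 t := by positivity
  have hFt : (0:ℝ) < Real.log (s ^ 3 / 27) - Real.log (a 0 t * a 1 t * a 2 t) :=
    Real.sqrt_pos.mp hη
  -- derivative construction
  have h0 := hda 0 t
  have h1 := hda 1 t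
  have h2 := hda 2 t
  rw [show (0:ZMod 3) - 1 = 2 from by decide, show (0:ZMod 3) + 1 = 1 from by decide] at h0
  rw [show (1:ZMod 3) - 1 = 0 from by decide, show (1:ZMod 3) + 1 = 2 from by decide] at h1
  rw [show (2:ZMod 3) - 1 = 1 from by decide, show (2:ZMod 3) + 1 = 0 from by decide] at h2
  have hF := (hasDerivAt_const t (Real.log (s ^ 3 / 27))).sub (((h0.mul h1).mul h2).log hPi.ne')
  have hsq : HasDerivAt
      (fun τ => Real.sqrt (Real.log (s ^ 3 / 27) - Real.log (a 0 τ * a 1 τ * a 2 τ)))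
      ((0 - (((p * a 2 t * (a 0 t + app 0 t) - p * a 0 t * (a 1 t + app 1 t)) * a 1 t
        + a 0 t * (p * a 0 t * (a 1 t + app 1 t) - p * a 1 t * (a 2 t + app 2 t))) * a 2 t
        + a 0 t * a 1 t * (p * a 1 t * (a 2 t + app 2 t) - p * a 2 t * (a 0 t + app 0 t)))
          / (a 0 t * a 1 t * a 2 t))
        / (2 * Real.sqrt (Real.log (s ^ 3 / 27) - Real.log (a 0 t * a 1 t * a 2 t)))) t :=
    hF.sqrt hFt.ne'
  refine ⟨hsq.differentiableAt, ?_⟩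
  rw [hsq.deriv]
  clear hF h0 h1 h2
  -- sum expansions
  have hsum3d : ∑ i : ZMod 3, (a i t - a (i - 1) t) ^ 2
      = (a 0 t - a 2 t)^2 + (a 1 t - a 0 t)^2 + (a 2 t - a 1 t)^2 := by
    rw [osc_sum3 (fun i => (a i t - a (i - 1) t) ^ 2)]
    simp only [show ((0:ZMod 3) - 1) = 2 from by decide, show ((1:ZMod 3) - 1) = 0 from by decide,
      show ((2:ZMod 3) - 1) = 1 from by decide]
  have hsum3k : ∑ i : ZMod 3, (s * app i t / a i t - a i t) ^ 2
      = (s * app 0 t / a 0 t - a 0 t)^2 + (s * app 1 t / a 1 t - a 1 t)^2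
        + (s * app 2 t / a 2 t - a 2 t)^2 := by
    rw [osc_sum3 (fun i => (s * app i t / a i t - a i t) ^ 2)]
  rw [hsum3d] at hδ
  rw [hsum3k]
  -- atoms
  set d0 : ℝ := a 0 t - a 2 t with hd0def
  set d1 : ℝ := a 1 t - a 0 t with hd1def
  set d2 : ℝ := a 2 t - a 1 t with hd2def
  set k0 : ℝ := s * app 0 t / a 0 t - a 0 t with hk0def
  set k1 : ℝ := s * app 1 t / a 1 t - a 1 t with hk1def
  set k2 : ℝ := s * app 2 t / a 2 t - a 2 t with hk2def
  set E := Real.sqrt (Real.log (s ^ 3 / 27) - Real.log (a 0 t * a 1 t * a 2 t)) with hEdef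
  set D := Real.sqrt (d0^2 + d1^2 + d2^2) with hDdef
  set K := Real.sqrt (k0^2 + k1^2 + k2^2) with hKdef
  have hE : 0 < E := hη
  have hE2 : E^2 = Real.log (s ^ 3 / 27) - Real.log (a 0 t * a 1 t * a 2 t) := by
    rw [hEdef]; exact Real.sq_sqrt hFt.le
  have hD2 : D^2 = d0^2 + d1^2 + d2^2 := by rw [hDdef]; exact Real.sq_sqrt (by positivity)
  have hK2 : K^2 = k0^2 + k1^2 + k2^2 := by rw [hKdef]; exact Real.sq_sqrt (by positivity)
  have hD0 : (0:ℝ) ≤ D := by rw [hDdef]; exact Real.sqrt_nonneg _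
  have hK0 : (0:ℝ) ≤ K := by rw [hKdef]; exact Real.sqrt_nonneg _
  clear_value E D K
  clear_value d0 d1 d2 k0 k1 k2
  -- Cauchy-Schwarz
  have hS1lb : -(D*K) ≤ d0*k0 + d1*k1 + d2*k2 := osc_s1_lb D K d0 d1 d2 k0 k1 k2 hD2 hK2 hD0 hK0
  -- bounds on individual deltas
  obtain ⟨hb0, hb1, hb2⟩ := osc_delta_bounds s D d0 d1 d2 hs hD2 hD0 hδ
  have hsumt := hsum t
  -- the u variables
  set u0 : ℝ := (3 * a 0 t - s)/s with hu0def
  set u1 : ℝ := (3 * a 1 t - s)/s with hu1def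
  set u2 : ℝ := (3 * a 2 t - s)/s with hu2def
  have e0 : s * u0 = 3 * a 0 t - s := by rw [hu0def]; field_simp
  have e1 : s * u1 = 3 * a 1 t - s := by rw [hu1def]; field_simp
  have e2 : s * u2 = 3 * a 2 t - s := by rw [hu2def]; field_simp
  have hub0 : -(1/6) ≤ u0 ∧ u0 ≤ 1/6 := by
    constructor
    · rw [hu0def, le_div_iff₀ hs]
      linarith [hb0.1, hb0.2, hb1.1, hb1.2, hsumt, hd0def, hd1def]
    · rw [hu0def, div_le_iff₀ hs]
      linarith [hb0.1, hb0.2, hb1.1, hb1.2, hsumt, hd0def, hd1def]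
  have hub1 : -(1/6) ≤ u1 ∧ u1 ≤ 1/6 := by
    constructor
    · rw [hu1def, le_div_iff₀ hs]
      linarith [hb1.1, hb1.2, hb2.1, hb2.2, hsumt, hd1def, hd2def]
    · rw [hu1def, div_le_iff₀ hs]
      linarith [hb1.1, hb1.2, hb2.1, hb2.2, hsumt, hd1def, hd2def]
  have hub2 : -(1/6) ≤ u2 ∧ u2 ≤ 1/6 := by
    constructor
    · rw [hu2def, le_div_iff₀ hs]
      linarith [hb2.1, hb2.2, hb0.1, hb0.2, hsumt, hd2def, hd0def]
    · rw [hu2def, div_le_iff₀ hs]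
      linarith [hb2.1, hb2.2, hb0.1, hb0.2, hsumt, hd2def, hd0def]
  clear_value u0 u1 u2
  have husq : s^2 * (u0^2 + u1^2 + u2^2) = 3 * (d0^2 + d1^2 + d2^2) := by
    rw [hd0def, hd1def, hd2def]
    linear_combination (s*u0 + 3*a 0 t - s)*e0 + (s*u1 + 3*a 1 t - s)*e1
      + (s*u2 + 3*a 2 t - s)*e2 + (3*(a 0 t + a 1 t + a 2 t) - 3*s)*hsumt
  -- F t in terms of u
  have hs3 : (0:ℝ) < s/3 := by linarith
  have hv0 : (1:ℝ) + u0 = a 0 t / (s/3) := by rw [hu0def]; field_simp; ring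
  have hv1 : (1:ℝ) + u1 = a 1 t / (s/3) := by rw [hu1def]; field_simp; ring
  have hv2 : (1:ℝ) + u2 = a 2 t / (s/3) := by rw [hu2def]; field_simp; ring
  have hlog0 : Real.log (1 + u0) = Real.log (a 0 t) - Real.log (s/3) := by
    rw [hv0, Real.log_div hA0.ne' hs3.ne']
  have hlog1 : Real.log (1 + u1) = Real.log (a 1 t) - Real.log (s/3) := by
    rw [hv1, Real.log_div hA1.ne' hs3.ne']
  have hlog2 : Real.log (1 + u2) = Real.log (a 2 t) - Real.log (s/3) := by
    rw [hv2, Real.log_div hA2.ne' hs3.ne']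
  have hlogS : Real.log (s ^ 3 / 27) = 3 * Real.log (s/3) := by
    rw [show s ^ 3 / 27 = (s/3)^3 by ring, Real.log_pow]; push_cast; ring
  have hlogPi : Real.log (a 0 t * a 1 t * a 2 t)
      = Real.log (a 0 t) + Real.log (a 1 t) + Real.log (a 2 t) := by
    rw [Real.log_mul (by positivity) hA2.ne', Real.log_mul hA0.ne' hA1.ne']
  have hFtu : Real.log (s ^ 3 / 27) - Real.log (a 0 t * a 1 t * a 2 t)
      = -(Real.log (1+u0) + Real.log (1+u1) + Real.log (1+u2)) := by
    rw [hlog0, hlog1, hlog2, hlogS, hlogPi]; ring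
  -- two-sided bounds for E^2
  have hup0 := osc_log_quad_upper hub0.1 hub0.2
  have hup1 := osc_log_quad_upper hub1.1 hub1.2
  have hup2 := osc_log_quad_upper hub2.1 hub2.2
  have hlo0 := osc_log_quad_lower hub0.1 hub0.2
  have hlo1 := osc_log_quad_lower hub1.1 hub1.2
  have hlo2 := osc_log_quad_lower hub2.1 hub2.2
  have husumz : s * (u0 + u1 + u2) = 0 := by linear_combination e0 + e1 + e2 + 3*hsumt
  have husum : u0 + u1 + u2 = 0 := by
    rcases mul_eq_zero.mp husumz with h | h
    · exact absurd h hs.ne'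
    · exact h
  have hElow : (u0^2 + u1^2 + u2^2)/3 ≤ E^2 := by
    rw [hE2, hFtu]; linarith [hup0, hup1, hup2, husum]
  have hEup : E^2 ≤ (3/4) * (u0^2 + u1^2 + u2^2) := by
    rw [hE2, hFtu]; linarith [hlo0, hlo1, hlo2, husum]
  -- D vs sE
  have hsE : (0:ℝ) ≤ s * E := mul_nonneg hs.le hE.le
  have hS2le : d0^2 + d1^2 + d2^2 ≤ s^2 * E^2 :=
    osc_sq1 s (u0^2 + u1^2 + u2^2) (d0^2 + d1^2 + d2^2) (E^2) husq hElow
  have hS2ge : s^2 * E^2 ≤ 9/4 * (d0^2 + d1^2 + d2^2) :=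
    osc_sq2 s (u0^2 + u1^2 + u2^2) (d0^2 + d1^2 + d2^2) (E^2) husq hEup
  have hDsE : D ≤ s * E := by
    have h1 : D^2 ≤ (s*E)^2 := by
      rw [hD2, show (s*E)^2 = s^2*E^2 from by ring]; exact hS2le
    exact (abs_le_of_sq_le_sq' h1 hsE).2
  have hsED : 2/3 * (s * E) ≤ D := by
    have h1 : (2/3*(s*E))^2 ≤ D^2 := by
      rw [hD2, show (2/3*(s*E))^2 = 4/9*(s^2*E^2) from by ring]
      linarith [hS2ge]
    exact (abs_le_of_sq_le_sq' h1 hD0).2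
  -- identify the derivative value
  have hderiv_eq : (0 - (((p * a 2 t * (a 0 t + app 0 t) - p * a 0 t * (a 1 t + app 1 t)) * a 1 t
        + a 0 t * (p * a 0 t * (a 1 t + app 1 t) - p * a 1 t * (a 2 t + app 2 t))) * a 2 t
        + a 0 t * a 1 t * (p * a 1 t * (a 2 t + app 2 t) - p * a 2 t * (a 0 t + app 0 t)))
          / (a 0 t * a 1 t * a 2 t))
      = p / s * ((d0*k0 + d1*k1 + d2*k2) + (d0^2 + d1^2 + d2^2) / 2) := by
    rw [hd0def, hd1def, hd2def, hk0def, hk1def, hk2def]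
    field_simp
    ring
  rw [ge_iff_le, hderiv_eq, le_div_iff₀ (by positivity : (0:ℝ) < 2 * E),
    show p / s * ((d0*k0 + d1*k1 + d2*k2) + (d0^2 + d1^2 + d2^2) / 2)
      = p * ((d0*k0 + d1*k1 + d2*k2) + (d0^2 + d1^2 + d2^2)/2) / s by ring,
    le_div_iff₀ hs]
  exact osc_final p s E K D (d0*k0 + d1*k1 + d2*k2) (d0^2 + d1^2 + d2^2)
    hp hK0 hD0 hsE hD2 hS1lb hDsE hsED
end

section
/- Fix reals s with 0 < s ≤ 1, p with 0 < p ≤ s/18, and a real n > 0. Let aᵢ, aᵢ⁺⁺ : ℝ → ℝ (i ∈ {1,2,3}, indices cyclic mod 3) be a trajectory of the source-free oscillator dynamics (aᵢ' = p·aᵢ₋₁(aᵢ + aᵢ⁺⁺) − p·aᵢ(aᵢ₊₁ + aᵢ₊₁⁺⁺), (aᵢ⁺⁺)' = aᵢ² − s·aᵢ⁺⁺, aᵢ > 0, a₁+a₂+a₃ ≡ s, 0 ≤ aᵢ⁺⁺ ≤ aᵢ). Define κ, δ, η as usual and set η* = √(η² + 1/n) and κ* = √(κ² + 1/n). Then at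 every time t with δ(t) ≤ s/12, the functions η* and κ* are differentiable and satisfy (η*)'(t) ≥ (p·s/9)·η*(t) − (p/2)·κ*(t) − (2·p·s)/(9·√n) and (κ*)'(t) ≤ −(s/2)·κ*(t) + 18·p·s·η*(t) + s/√n. -/
lemma log_upper {x : ℝ} (h : x^2 ≤ 1/48) : Real.log (1+x) ≤ x - x^2/3 := by
  have hx1 : -(1/6) ≤ x := by nlinarith
  have hx2 : x ≤ 1/6 := by nlinarith
  have h1x : (0:ℝ) < 1 + x := by linarith
  have hw4 : (0:ℝ) < 1 + (x - x^2/3)/4 := by nlinarith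
  have h1 : 1 + (x - x^2/3)/4 ≤ Real.exp ((x - x^2/3)/4) := by
    have := Real.add_one_le_exp ((x - x^2/3)/4); linarith
  have he : (1 + (x - x^2/3)/4)^4 ≤ Real.exp (x - x^2/3) := by
    calc (1 + (x - x^2/3)/4)^4 ≤ (Real.exp ((x - x^2/3)/4))^4 := by
          exact pow_le_pow_left₀ hw4.le h1 4
      _ = Real.exp (x - x^2/3) := by
          rw [← Real.exp_nat_mul]; norm_num; ring_nf
  have hpoly : 1 + x ≤ (1 + (x - x^2/3)/4)^4 := by
    nlinarith [sq_nonneg x, sq_nonneg (x^2), sq_nonneg (x^3), sq_nonneg (x*(1-6*x)), sq_nonneg (x*(1+6*x))]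
  have hle : 1 + x ≤ Real.exp (x - x^2/3) := le_trans hpoly he
  calc Real.log (1+x) ≤ Real.log (Real.exp (x - x^2/3)) := Real.log_le_log h1x hle
    _ = x - x^2/3 := Real.log_exp _

lemma log_lower {x : ℝ} (h : x^2 ≤ 1/48) : x - (3/4)*x^2 ≤ Real.log (1+x) := by
  have hx1 : -(1/6) ≤ x := by nlinarith
  have hx2 : x ≤ 1/6 := by nlinarith
  have h1x : (0:ℝ) < 1 + x := by linarith
  have hv4 : (0:ℝ) < 1 - (x - (3/4)*x^2)/4 := by nlinarith
  have h1 : 1 - (x - (3/4)*x^2)/4 ≤ Real.exp (-((x - (3/4)*x^2)/4)) := by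
    have := Real.add_one_le_exp (-((x - (3/4)*x^2)/4)); linarith
  have h2 : Real.exp ((x - (3/4)*x^2)/4) * (1 - (x - (3/4)*x^2)/4) ≤ 1 := by
    calc Real.exp ((x - (3/4)*x^2)/4) * (1 - (x - (3/4)*x^2)/4)
        ≤ Real.exp ((x - (3/4)*x^2)/4) * Real.exp (-((x - (3/4)*x^2)/4)) :=
          mul_le_mul_of_nonneg_left h1 (Real.exp_pos _).le
      _ = 1 := by rw [← Real.exp_add]; simp
  have h3 : Real.exp (x - (3/4)*x^2) * (1 - (x - (3/4)*x^2)/4)^4 ≤ 1 := by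
    have h4 := pow_le_pow_left₀
      (by positivity : (0:ℝ) ≤ Real.exp ((x - (3/4)*x^2)/4) * (1 - (x - (3/4)*x^2)/4)) h2 4
    rw [mul_pow, one_pow, ← Real.exp_nat_mul] at h4
    have heq : ((4:ℕ):ℝ) * ((x - (3/4)*x^2)/4) = x - (3/4)*x^2 := by push_cast; ring
    rw [heq] at h4
    exact h4
  have hpoly : (1:ℝ) ≤ (1+x) * (1 - (x - (3/4)*x^2)/4)^4 := by
    nlinarith [sq_nonneg x, sq_nonneg (x^2), sq_nonneg (x^3), sq_nonneg (x*(1-6*x)), sq_nonneg (x*(1+6*x))]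
  have hle : Real.exp (x - (3/4)*x^2) ≤ 1 + x := by
    have hp4 : (0:ℝ) < (1 - (x - (3/4)*x^2)/4)^4 := by positivity
    nlinarith [h3, hpoly]
  calc x - (3/4)*x^2 = Real.log (Real.exp (x - (3/4)*x^2)) := (Real.log_exp _).symm
    _ ≤ Real.log (1+x) := Real.log_le_log (Real.exp_pos _) hle


lemma cs3 (u1 u2 u3 v1 v2 v3 : ℝ) :
    (u1*v1 + u2*v2 + u3*v3)^2 ≤ (u1^2+u2^2+u3^2)*(v1^2+v2^2+v3^2) := by
  nlinarith [sq_nonneg (u1*v2 - u2*v1), sq_nonneg (u1*v3 - u3*v1), sq_nonneg (u2*v3 - u3*v2)]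

set_option maxHeartbeats 1000000 in

lemma tterm_bound (p s dv kap Ai Aim Aip Bi Bip : ℝ)
    (hp : 0 < p) (hs : 0 < s)
    (hAi : 5*s/18 ≤ Ai) (hAi' : Ai ≤ 7*s/18)
    (hAim : 5*s/18 ≤ Aim) (hAim' : Aim ≤ 7*s/18)
    (hAip : 5*s/18 ≤ Aip) (hAip' : Aip ≤ 7*s/18)
    (hd1 : |Aim - Aip| ≤ dv) (hd2 : |Ai - Aip| ≤ dv)
    (hKi : |s*Bi/Ai - Ai| ≤ kap) (hKip : |s*Bip/Aip - Aip| ≤ kap)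
    (hBi : 0 ≤ Bi) (hBi' : Bi ≤ Ai) (hBip : 0 ≤ Bip) (hBip' : Bip ≤ Aip) :
    -(kap * (p*s*((56/81)*dv + (49/162)*kap)) * (23/5))
      ≤ (s*Bi/Ai - Ai) * (p*Aim*(Ai+Bi) - p*Ai*(Aip+Bip)) * (s*Bi/Ai^2 + 1) := by
  have hAipos : 0 < Ai := lt_of_lt_of_le (by positivity) hAi
  have hAippos : 0 < Aip := lt_of_lt_of_le (by positivity) hAip
  have hAimpos : 0 < Aim := lt_of_lt_of_le (by positivity) hAim
  have hdv : 0 ≤ dv := le_trans (abs_nonneg _) hd1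
  have hkap : 0 ≤ kap := le_trans (abs_nonneg _) hKi
  have hC0 : 0 ≤ s*Bi/Ai^2 + 1 := by positivity
  have hC1 : s*Bi/Ai^2 + 1 ≤ 23/5 := by
    rw [div_add' _ _ _ (by positivity), div_le_iff₀ (by positivity)]
    nlinarith
  have hid : p*Aim*(Ai+Bi) - p*Ai*(Aip+Bip)
      = p*Ai*(Aim - Aip) + (p*Ai/s)*(Aim*(s*Bi/Ai - Ai) - Aip*(s*Bip/Aip - Aip))
        + (p*Ai/s)*(Aim*Ai - Aip^2) := by
    field_simp
    ring
  have hpA : |p*Ai/s| ≤ p*(7*s/18)/s := by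
    rw [abs_div, abs_mul, abs_of_pos hp, abs_of_pos hAipos, abs_of_pos hs]
    gcongr
  have h1 : |p*Ai*(Aim - Aip)| ≤ p*(7*s/18)*dv := by
    rw [abs_mul, abs_mul, abs_of_pos hp, abs_of_pos hAipos]
    have := mul_le_mul hAi' hd1 (abs_nonneg _) (by positivity : (0:ℝ) ≤ 7*s/18)
    nlinarith [hp.le]
  have h2 : |(p*Ai/s)*(Aim*(s*Bi/Ai - Ai) - Aip*(s*Bip/Aip - Aip))|
      ≤ (p*(7*s/18)/s)*((7*s/18)*kap + (7*s/18)*kap) := by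
    rw [abs_mul]
    have hb : |Aim*(s*Bi/Ai - Ai) - Aip*(s*Bip/Aip - Aip)|
        ≤ (7*s/18)*kap + (7*s/18)*kap := by
      refine le_trans (abs_sub _ _) ?_
      rw [abs_mul, abs_mul, abs_of_pos hAimpos, abs_of_pos hAippos]
      have u1 := mul_le_mul hAim' hKi (abs_nonneg _) (by positivity : (0:ℝ) ≤ 7*s/18)
      have u2 := mul_le_mul hAip' hKip (abs_nonneg _) (by positivity : (0:ℝ) ≤ 7*s/18)
      linarith
    exact mul_le_mul hpA hb (abs_nonneg _) (by positivity)
  have h3 : |(p*Ai/s)*(Aim*Ai - Aip^2)| ≤ (p*(7*s/18)/s)*((7*s/18)*dv + (7*s/18)*dv) := by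
    rw [abs_mul]
    have hb : |Aim*Ai - Aip^2| ≤ (7*s/18)*dv + (7*s/18)*dv := by
      have he : Aim*Ai - Aip^2 = Ai*(Aim - Aip) + Aip*(Ai - Aip) := by ring
      rw [he]
      refine le_trans (abs_add_le _ _) ?_
      rw [abs_mul, abs_mul, abs_of_pos hAipos, abs_of_pos hAippos]
      have u1 := mul_le_mul hAi' hd1 (abs_nonneg _) (by positivity : (0:ℝ) ≤ 7*s/18)
      have u2 := mul_le_mul hAip' hd2 (abs_nonneg _) (by positivity : (0:ℝ) ≤ 7*s/18)
      linarith
    exact mul_le_mul hpA hb (abs_nonneg _) (by positivity)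
  have e2 : (p*(7*s/18)/s)*((7*s/18)*kap + (7*s/18)*kap) = (49/162)*(p*s*kap) := by
    field_simp; ring
  have e3 : (p*(7*s/18)/s)*((7*s/18)*dv + (7*s/18)*dv) = (49/162)*(p*s*dv) := by
    field_simp; ring
  rw [e2] at h2
  rw [e3] at h3
  have habs : |p*Aim*(Ai+Bi) - p*Ai*(Aip+Bip)| ≤ p*s*((56/81)*dv + (49/162)*kap) := by
    rw [hid]
    refine le_trans (abs_add_three _ _ _) ?_
    linarith [h1, h2, h3]
  have hfull : |(s*Bi/Ai - Ai) * (p*Aim*(Ai+Bi) - p*Ai*(Aip+Bip)) * (s*Bi/Ai^2 + 1)|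
      ≤ kap * (p*s*((56/81)*dv + (49/162)*kap)) * (23/5) := by
    rw [abs_mul, abs_mul, abs_of_nonneg hC0]
    apply mul_le_mul _ hC1 hC0 (by positivity)
    exact mul_le_mul hKi habs (abs_nonneg _) hkap
  linarith [neg_abs_le ((s*Bi/Ai - Ai) * (p*Aim*(Ai+Bi) - p*Ai*(Aip+Bip)) * (s*Bi/Ai^2 + 1)), hfull]


lemma eta_ineq (s p n L Ksq D2 S Lp : ℝ)
    (hs : 0 < s) (hp : 0 < p) (hn : 0 < n)
    (hLp : s * Lp = p * (D2 / 2 + S))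
    (hS : -(Real.sqrt Ksq * Real.sqrt D2) ≤ S)
    (hD2lb : 4/9 * (s^2 * L) ≤ D2) (hD2ub : D2 ≤ s^2*L)
    (hKsq0 : 0 ≤ Ksq) (hL0 : 0 ≤ L) :
    p * s / 9 * Real.sqrt (L + 1/n) - p / 2 * Real.sqrt (Ksq + 1/n)
      - 2 * p * s / (9 * Real.sqrt n) ≤ Lp / (2 * Real.sqrt (L + 1/n)) := by
  have hsn : 0 < Real.sqrt n := Real.sqrt_pos.mpr hn
  have hLn : 0 < L + 1/n := by positivity
  have hKn : 0 < Ksq + 1/n := by positivity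
  have hES : 0 < Real.sqrt (L + 1/n) := Real.sqrt_pos.mpr hLn
  have hKS : 0 < Real.sqrt (Ksq + 1/n) := Real.sqrt_pos.mpr hKn
  rw [le_div_iff₀ (by positivity), ← mul_le_mul_iff_right₀ hs, hLp]
  have hη0 : (0:ℝ) ≤ Real.sqrt L := Real.sqrt_nonneg L
  have hκ0 : (0:ℝ) ≤ Real.sqrt Ksq := Real.sqrt_nonneg Ksq
  have hdv0 : (0:ℝ) ≤ Real.sqrt D2 := Real.sqrt_nonneg D2
  have huE : 1/Real.sqrt n ≤ Real.sqrt (L + 1/n) := by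
    rw [one_div, ← Real.sqrt_inv]
    exact Real.sqrt_le_sqrt (by rw [← one_div]; linarith)
  have hηE : Real.sqrt L ≤ Real.sqrt (L + 1/n) :=
    Real.sqrt_le_sqrt (by have := one_div_pos.mpr hn; linarith)
  have hκK : Real.sqrt Ksq ≤ Real.sqrt (Ksq + 1/n) :=
    Real.sqrt_le_sqrt (by have := one_div_pos.mpr hn; linarith)
  have hδη : Real.sqrt D2 ≤ s * Real.sqrt L := by
    have h := Real.sqrt_le_sqrt hD2ub
    rwa [Real.sqrt_mul (sq_nonneg s), Real.sqrt_sq hs.le] at h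
  have hESsq : (Real.sqrt (L+1/n))^2 = L + 1/n := Real.sq_sqrt hLn.le
  have t1 : p*s*(Real.sqrt Ksq * Real.sqrt L)
      ≤ p*s*(Real.sqrt (Ksq+1/n) * Real.sqrt (L+1/n)) :=
    mul_le_mul_of_nonneg_left (mul_le_mul hκK hηE hη0 hKS.le) (by positivity)
  have t2 : -(Real.sqrt Ksq * (s * Real.sqrt L)) ≤ S :=
    le_trans (neg_le_neg (mul_le_mul_of_nonneg_left hδη hκ0)) hS
  have t6 : p * (-(Real.sqrt Ksq * (s*Real.sqrt L))) ≤ p * S :=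
    mul_le_mul_of_nonneg_left t2 hp.le
  have t5 : p * (4/9*(s^2*L)) ≤ p * D2 := mul_le_mul_of_nonneg_left hD2lb hp.le
  have t2' : p*s^2*((1/Real.sqrt n)*(1/Real.sqrt n))
      ≤ p*s^2*((1/Real.sqrt n)*Real.sqrt (L+1/n)) :=
    mul_le_mul_of_nonneg_left (mul_le_mul_of_nonneg_left huE (by positivity)) (by positivity)
  have hun : (1/Real.sqrt n)*(1/Real.sqrt n) = 1/n := by
    rw [div_mul_div_comm, one_mul, Real.mul_self_sqrt hn.le]
  have t7 : p*s^2*(Real.sqrt (L+1/n))^2 = p*s^2*L + p*s^2*(1/n) := by rw [hESsq]; ring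
  have t8 : p*s^2*(1/n) = p*s^2*((1/Real.sqrt n)*(1/Real.sqrt n)) := by rw [hun]
  have t9 : (0:ℝ) ≤ p*s^2*((1/Real.sqrt n)*Real.sqrt (L+1/n)) := by positivity
  rw [show 2 * p * s / (9 * Real.sqrt n) = (2/9) * (p * s * (1/Real.sqrt n)) by ring]
  linarith [t1, t5, t6, t2', t7, t8, t9]

lemma kappa_ineq (s p n L Ksq D2 Kp T : ℝ)
    (hs : 0 < s) (hs1 : s ≤ 1) (hp : 0 < p) (hp18 : p ≤ s/18) (hn : 0 < n)
    (hKp : Kp = -(2*s*Ksq) - 2*T)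
    (hT : -((69/5) * (Real.sqrt Ksq * (p*s*((56/81)*Real.sqrt D2 + (49/162)*Real.sqrt Ksq)))) ≤ T)
    (hD2ub : D2 ≤ s^2*L) (hKsq0 : 0 ≤ Ksq) (hL0 : 0 ≤ L) :
    Kp / (2*Real.sqrt (Ksq + 1/n))
      ≤ -(s/2)*Real.sqrt (Ksq+1/n) + 18*p*s*Real.sqrt (L+1/n) + s/Real.sqrt n := by
  have hsn : 0 < Real.sqrt n := Real.sqrt_pos.mpr hn
  have hLn : 0 < L + 1/n := by positivity
  have hKn : 0 < Ksq + 1/n := by positivity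
  have hES : 0 < Real.sqrt (L + 1/n) := Real.sqrt_pos.mpr hLn
  have hKS : 0 < Real.sqrt (Ksq + 1/n) := Real.sqrt_pos.mpr hKn
  rw [div_le_iff₀ (by positivity), hKp]
  have hη0 : (0:ℝ) ≤ Real.sqrt L := Real.sqrt_nonneg L
  have hκ0 : (0:ℝ) ≤ Real.sqrt Ksq := Real.sqrt_nonneg Ksq
  have hdv0 : (0:ℝ) ≤ Real.sqrt D2 := Real.sqrt_nonneg D2
  have huK : 1/Real.sqrt n ≤ Real.sqrt (Ksq + 1/n) := by
    rw [one_div, ← Real.sqrt_inv]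
    exact Real.sqrt_le_sqrt (by rw [← one_div]; linarith)
  have hηE : Real.sqrt L ≤ Real.sqrt (L + 1/n) :=
    Real.sqrt_le_sqrt (by have := one_div_pos.mpr hn; linarith)
  have hκK : Real.sqrt Ksq ≤ Real.sqrt (Ksq + 1/n) :=
    Real.sqrt_le_sqrt (by have := one_div_pos.mpr hn; linarith)
  have hδη : Real.sqrt D2 ≤ s * Real.sqrt L := by
    have h := Real.sqrt_le_sqrt hD2ub
    rwa [Real.sqrt_mul (sq_nonneg s), Real.sqrt_sq hs.le] at h
  have hδE : Real.sqrt D2 ≤ Real.sqrt (L + 1/n) := by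
    have : s * Real.sqrt L ≤ 1 * Real.sqrt L := by
      apply mul_le_mul_of_nonneg_right hs1 hη0
    calc Real.sqrt D2 ≤ s * Real.sqrt L := hδη
      _ ≤ 1 * Real.sqrt L := this
      _ = Real.sqrt L := one_mul _
      _ ≤ Real.sqrt (L + 1/n) := hηE
  have hKSsq : (Real.sqrt (Ksq+1/n))^2 = Ksq + 1/n := Real.sq_sqrt hKn.le
  have u1 : s*(Real.sqrt (Ksq+1/n))^2 = s*Ksq + s*(1/n) := by rw [hKSsq]; ring
  have hun : (1/Real.sqrt n)*(1/Real.sqrt n) = 1/n := by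
    rw [div_mul_div_comm, one_mul, Real.mul_self_sqrt hn.le]
  have k4 : s*(1/n) = s*((1/Real.sqrt n)*(1/Real.sqrt n)) := by rw [hun]
  have k5 : s*((1/Real.sqrt n)*(1/Real.sqrt n)) ≤ s*((1/Real.sqrt n)*Real.sqrt (Ksq+1/n)) :=
    mul_le_mul_of_nonneg_left (mul_le_mul_of_nonneg_left huK (by positivity)) hs.le
  have k1 : p*s*(Real.sqrt Ksq * Real.sqrt D2)
      ≤ p*s*(Real.sqrt (Ksq+1/n) * Real.sqrt (L+1/n)) :=
    mul_le_mul_of_nonneg_left (mul_le_mul hκK hδE hdv0 hKS.le) (by positivity)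
  have hp118 : p ≤ 1/18 := by linarith
  have k2 : p*(s*(Real.sqrt Ksq*Real.sqrt Ksq)) ≤ (1/18)*(s*(Real.sqrt Ksq*Real.sqrt Ksq)) :=
    mul_le_mul_of_nonneg_right hp118 (by positivity)
  have k3 : s*(Real.sqrt Ksq*Real.sqrt Ksq) = s*Ksq := by rw [Real.mul_self_sqrt hKsq0]
  have k6 : (0:ℝ) ≤ s*((1/Real.sqrt n)*Real.sqrt (Ksq+1/n)) := by positivity
  have k7 : (0:ℝ) ≤ p*s*(Real.sqrt (Ksq+1/n) * Real.sqrt (L+1/n)) := by positivity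
  have k8 : (0:ℝ) ≤ s*Ksq := by positivity
  have hsw : s / Real.sqrt n = s * (1/Real.sqrt n) := by ring
  rw [hsw]
  linarith [k1, k2, k3, k4, k5, k6, k7, k8, u1, hT]



set_option maxHeartbeats 2000000 in
/-- Along a trajectory of the source-free oscillator dynamics with `p ≤ s/18`,
at every time with `δ(t) ≤ s/12`, the regularized potentials
`η* = √(η² + 1/n)` and `κ* = √(κ² + 1/n)` are differentiable and satisfy
`(η*)' ≥ (ps/9)η* − (p/2)κ* − 2ps/(9√n)` and
`(κ*)' ≤ −(s/2)κ* + 18psη* + s/√n`. -/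
theorem regularized_potentials_drift
    (s p : ℝ) (hs : 0 < s) (hs1 : s ≤ 1) (hp : 0 < p) (hp18 : p ≤ s / 18)
    (n : ℝ) (hn : 0 < n)
    (a app : ZMod 3 → ℝ → ℝ)
    (hpos : ∀ i t, 0 < a i t)
    (hsum : ∀ t, a 0 t + a 1 t + a 2 t = s)
    (happ : ∀ i t, 0 ≤ app i t ∧ app i t ≤ a i t)
    (hda : ∀ i t, HasDerivAt (a i)
      (p * a (i - 1) t * (a i t + app i t)
        - p * a i t * (a (i + 1) t + app (i + 1) t)) t)
    (hdapp : ∀ i t, HasDerivAt (app i) ((a i t) ^ 2 - s * app i t) t) :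
    ∀ t : ℝ,
      Real.sqrt (∑ i : ZMod 3, (a i t - a (i - 1) t) ^ 2) ≤ s / 12 →
      (DifferentiableAt ℝ
          (fun τ => Real.sqrt ((Real.log (s ^ 3 / 27)
            - Real.log (a 0 τ * a 1 τ * a 2 τ)) + 1 / n)) t ∧
        DifferentiableAt ℝ
          (fun τ => Real.sqrt ((∑ i : ZMod 3, (s * app i τ / a i τ - a i τ) ^ 2) + 1 / n)) t) ∧
      deriv (fun τ => Real.sqrt ((Real.log (s ^ 3 / 27)
            - Real.log (a 0 τ * a 1 τ * a 2 τ)) + 1 / n)) t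
          ≥ p * s / 9 * Real.sqrt ((Real.log (s ^ 3 / 27)
              - Real.log (a 0 t * a 1 t * a 2 t)) + 1 / n)
            - p / 2 * Real.sqrt ((∑ i : ZMod 3, (s * app i t / a i t - a i t) ^ 2) + 1 / n)
            - 2 * p * s / (9 * Real.sqrt n) ∧
      deriv (fun τ => Real.sqrt ((∑ i : ZMod 3, (s * app i τ / a i τ - a i τ) ^ 2) + 1 / n)) t
          ≤ -(s / 2) * Real.sqrt ((∑ i : ZMod 3, (s * app i t / a i t - a i t) ^ 2) + 1 / n)
            + 18 * p * s * Real.sqrt ((Real.log (s ^ 3 / 27)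
              - Real.log (a 0 t * a 1 t * a 2 t)) + 1 / n)
            + s / Real.sqrt n := by
  have sum3 : ∀ f : ZMod 3 → ℝ, ∑ i : ZMod 3, f i = f 0 + f 1 + f 2 := fun f => by
    rw [show (Finset.univ : Finset (ZMod 3)) = {0, 1, 2} by decide,
      Finset.sum_insert (by decide), Finset.sum_insert (by decide), Finset.sum_singleton]
    ring
  intro t hδ
  simp only [sum3] at hδ ⊢
  rw [show (0:ZMod 3) - 1 = 2 by decide, show (1:ZMod 3) - 1 = 0 by decide,
    show (2:ZMod 3) - 1 = 1 by decide] at hδ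
  have hd0 := hda 0 t
  have hd1 := hda 1 t
  have hd2 := hda 2 t
  rw [show (0:ZMod 3) - 1 = 2 by decide, show (0:ZMod 3) + 1 = 1 by decide] at hd0
  rw [show (1:ZMod 3) - 1 = 0 by decide, show (1:ZMod 3) + 1 = 2 by decide] at hd1
  rw [show (2:ZMod 3) - 1 = 1 by decide, show (2:ZMod 3) + 1 = 0 by decide] at hd2
  have hA0 : 0 < (a 0 t) := hpos 0 t
  have hA1 : 0 < (a 1 t) := hpos 1 t
  have hA2 : 0 < (a 2 t) := hpos 2 t
  have hB0l : 0 ≤ (app 0 t) := (happ 0 t).1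
  have hB0u : (app 0 t) ≤ (a 0 t) := (happ 0 t).2
  have hB1l : 0 ≤ (app 1 t) := (happ 1 t).1
  have hB1u : (app 1 t) ≤ (a 1 t) := (happ 1 t).2
  have hB2l : 0 ≤ (app 2 t) := (happ 2 t).1
  have hB2u : (app 2 t) ≤ (a 2 t) := (happ 2 t).2
  have hst : (a 0 t) + (a 1 t) + (a 2 t) = s := hsum t
  have hD20 : (0:ℝ) ≤ (((a 0 t) - (a 2 t))^2 + ((a 1 t) - (a 0 t))^2 + ((a 2 t) - (a 1 t))^2) := by positivity
  have hKsq0 : (0:ℝ) ≤ ((s*(app 0 t)/(a 0 t) - (a 0 t))^2 + (s*(app 1 t)/(a 1 t) - (a 1 t))^2 + (s*(app 2 t)/(a 2 t) - (a 2 t))^2) := by positivity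
  have hdv0 : (0:ℝ) ≤ Real.sqrt (((a 0 t) - (a 2 t))^2 + ((a 1 t) - (a 0 t))^2 + ((a 2 t) - (a 1 t))^2) := Real.sqrt_nonneg _
  have hD2ub144 : (((a 0 t) - (a 2 t))^2 + ((a 1 t) - (a 0 t))^2 + ((a 2 t) - (a 1 t))^2) ≤ s^2/144 := by
    nlinarith [hδ, Real.sqrt_nonneg (((a 0 t) - (a 2 t))^2 + ((a 1 t) - (a 0 t))^2 + ((a 2 t) - (a 1 t))^2), Real.sq_sqrt hD20]
  have habs02 : |(a 0 t) - (a 2 t)| ≤ Real.sqrt (((a 0 t) - (a 2 t))^2 + ((a 1 t) - (a 0 t))^2 + ((a 2 t) - (a 1 t))^2) := by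
    rw [← Real.sqrt_sq_eq_abs]
    exact Real.sqrt_le_sqrt (by nlinarith [sq_nonneg ((a 1 t) - (a 0 t)), sq_nonneg ((a 2 t) - (a 1 t))])
  have habs20 : |(a 2 t) - (a 0 t)| ≤ Real.sqrt (((a 0 t) - (a 2 t))^2 + ((a 1 t) - (a 0 t))^2 + ((a 2 t) - (a 1 t))^2) := by
    rw [← Real.sqrt_sq_eq_abs]
    exact Real.sqrt_le_sqrt (by nlinarith [sq_nonneg ((a 1 t) - (a 0 t)), sq_nonneg ((a 2 t) - (a 1 t))])
  have habs10 : |(a 1 t) - (a 0 t)| ≤ Real.sqrt (((a 0 t) - (a 2 t))^2 + ((a 1 t) - (a 0 t))^2 + ((a 2 t) - (a 1 t))^2) := by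
    rw [← Real.sqrt_sq_eq_abs]
    exact Real.sqrt_le_sqrt (by nlinarith [sq_nonneg ((a 0 t) - (a 2 t)), sq_nonneg ((a 2 t) - (a 1 t))])
  have habs01 : |(a 0 t) - (a 1 t)| ≤ Real.sqrt (((a 0 t) - (a 2 t))^2 + ((a 1 t) - (a 0 t))^2 + ((a 2 t) - (a 1 t))^2) := by
    rw [← Real.sqrt_sq_eq_abs]
    exact Real.sqrt_le_sqrt (by nlinarith [sq_nonneg ((a 0 t) - (a 2 t)), sq_nonneg ((a 2 t) - (a 1 t))])
  have habs21 : |(a 2 t) - (a 1 t)| ≤ Real.sqrt (((a 0 t) - (a 2 t))^2 + ((a 1 t) - (a 0 t))^2 + ((a 2 t) - (a 1 t))^2) := by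
    rw [← Real.sqrt_sq_eq_abs]
    exact Real.sqrt_le_sqrt (by nlinarith [sq_nonneg ((a 0 t) - (a 2 t)), sq_nonneg ((a 1 t) - (a 0 t))])
  have habs12 : |(a 1 t) - (a 2 t)| ≤ Real.sqrt (((a 0 t) - (a 2 t))^2 + ((a 1 t) - (a 0 t))^2 + ((a 2 t) - (a 1 t))^2) := by
    rw [← Real.sqrt_sq_eq_abs]
    exact Real.sqrt_le_sqrt (by nlinarith [sq_nonneg ((a 0 t) - (a 2 t)), sq_nonneg ((a 1 t) - (a 0 t))])
  have hb0 := abs_le.mp (le_trans habs02 hδ)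
  have hb1 := abs_le.mp (le_trans habs10 hδ)
  have hb2 := abs_le.mp (le_trans habs21 hδ)
  have hA0lb : 5*s/18 ≤ (a 0 t) := by obtain ⟨u1,u2⟩ := hb0; obtain ⟨v1,v2⟩ := hb1; linarith
  have hA0ub : (a 0 t) ≤ 7*s/18 := by obtain ⟨u1,u2⟩ := hb0; obtain ⟨v1,v2⟩ := hb1; linarith
  have hA1lb : 5*s/18 ≤ (a 1 t) := by obtain ⟨u1,u2⟩ := hb1; obtain ⟨v1,v2⟩ := hb2; linarith
  have hA1ub : (a 1 t) ≤ 7*s/18 := by obtain ⟨u1,u2⟩ := hb1; obtain ⟨v1,v2⟩ := hb2; linarith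
  have hA2lb : 5*s/18 ≤ (a 2 t) := by obtain ⟨u1,u2⟩ := hb2; obtain ⟨v1,v2⟩ := hb0; linarith
  have hA2ub : (a 2 t) ≤ 7*s/18 := by obtain ⟨u1,u2⟩ := hb2; obtain ⟨v1,v2⟩ := hb0; linarith
  have habsK0 : |s*(app 0 t)/(a 0 t) - (a 0 t)| ≤ Real.sqrt ((s*(app 0 t)/(a 0 t) - (a 0 t))^2 + (s*(app 1 t)/(a 1 t) - (a 1 t))^2 + (s*(app 2 t)/(a 2 t) - (a 2 t))^2) := by
    rw [← Real.sqrt_sq_eq_abs]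
    exact Real.sqrt_le_sqrt (by nlinarith [sq_nonneg (s*(app 1 t)/(a 1 t) - (a 1 t)), sq_nonneg (s*(app 2 t)/(a 2 t) - (a 2 t))])
  have habsK1 : |s*(app 1 t)/(a 1 t) - (a 1 t)| ≤ Real.sqrt ((s*(app 0 t)/(a 0 t) - (a 0 t))^2 + (s*(app 1 t)/(a 1 t) - (a 1 t))^2 + (s*(app 2 t)/(a 2 t) - (a 2 t))^2) := by
    rw [← Real.sqrt_sq_eq_abs]
    exact Real.sqrt_le_sqrt (by nlinarith [sq_nonneg (s*(app 0 t)/(a 0 t) - (a 0 t)), sq_nonneg (s*(app 2 t)/(a 2 t) - (a 2 t))])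
  have habsK2 : |s*(app 2 t)/(a 2 t) - (a 2 t)| ≤ Real.sqrt ((s*(app 0 t)/(a 0 t) - (a 0 t))^2 + (s*(app 1 t)/(a 1 t) - (a 1 t))^2 + (s*(app 2 t)/(a 2 t) - (a 2 t))^2) := by
    rw [← Real.sqrt_sq_eq_abs]
    exact Real.sqrt_le_sqrt (by nlinarith [sq_nonneg (s*(app 0 t)/(a 0 t) - (a 0 t)), sq_nonneg (s*(app 1 t)/(a 1 t) - (a 1 t))])
  have hident : (3*(a 0 t) - s)^2 + (3*(a 1 t) - s)^2 + (3*(a 2 t) - s)^2 = 3*((((a 0 t) - (a 2 t))^2 + ((a 1 t) - (a 0 t))^2 + ((a 2 t) - (a 1 t))^2)) := by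
    rw [← hst]; ring
  have hx0 : ((3*(a 0 t) - s)/s)^2 ≤ 1/48 := by
    rw [div_pow, div_le_iff₀ (by positivity : (0:ℝ) < s^2)]
    linarith [hident, hD2ub144, sq_nonneg (3*(a 1 t) - s), sq_nonneg (3*(a 2 t) - s)]
  have hx1 : ((3*(a 1 t) - s)/s)^2 ≤ 1/48 := by
    rw [div_pow, div_le_iff₀ (by positivity : (0:ℝ) < s^2)]
    linarith [hident, hD2ub144, sq_nonneg (3*(a 0 t) - s), sq_nonneg (3*(a 2 t) - s)]
  have hx2 : ((3*(a 2 t) - s)/s)^2 ≤ 1/48 := by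
    rw [div_pow, div_le_iff₀ (by positivity : (0:ℝ) < s^2)]
    linarith [hident, hD2ub144, sq_nonneg (3*(a 0 t) - s), sq_nonneg (3*(a 1 t) - s)]
  have e0 : 1 + (3*(a 0 t) - s)/s = 3*(a 0 t)/s := by field_simp; ring
  have e1 : 1 + (3*(a 1 t) - s)/s = 3*(a 1 t)/s := by field_simp; ring
  have e2 : 1 + (3*(a 2 t) - s)/s = 3*(a 2 t)/s := by field_simp; ring
  have lu0 := log_upper hx0
  have lu1 := log_upper hx1
  have lu2 := log_upper hx2
  have ll0 := log_lower hx0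
  have ll1 := log_lower hx1
  have ll2 := log_lower hx2
  rw [e0] at lu0 ll0
  rw [e1] at lu1 ll1
  rw [e2] at lu2 ll2
  have h3ne : (3:ℝ) ≠ 0 := by norm_num
  have hLeq : Real.log (s^3/27) - Real.log ((a 0 t) * (a 1 t) * (a 2 t))
      = -(Real.log (3*(a 0 t)/s) + Real.log (3*(a 1 t)/s) + Real.log (3*(a 2 t)/s)) := by
    rw [Real.log_div (pow_ne_zero 3 hs.ne') (by norm_num : (27:ℝ) ≠ 0),
      Real.log_pow, show (27:ℝ) = 3^3 by norm_num, Real.log_pow,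
      Real.log_mul (mul_pos hA0 hA1).ne' hA2.ne',
      Real.log_mul hA0.ne' hA1.ne',
      Real.log_div (by positivity : (3:ℝ)*(a 0 t) ≠ 0) hs.ne',
      Real.log_div (by positivity : (3:ℝ)*(a 1 t) ≠ 0) hs.ne',
      Real.log_div (by positivity : (3:ℝ)*(a 2 t) ≠ 0) hs.ne',
      Real.log_mul h3ne hA0.ne', Real.log_mul h3ne hA1.ne', Real.log_mul h3ne hA2.ne']
    push_cast
    ring
  have hsx : (3*(a 0 t) - s)/s + (3*(a 1 t) - s)/s + (3*(a 2 t) - s)/s = 0 := by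
    field_simp
    linarith
  have hLlb' : (1/3)*(((3*(a 0 t) - s)/s)^2 + ((3*(a 1 t) - s)/s)^2 + ((3*(a 2 t) - s)/s)^2)
      ≤ Real.log (s^3/27) - Real.log ((a 0 t) * (a 1 t) * (a 2 t)) := by
    rw [hLeq]; linarith [lu0, lu1, lu2, hsx]
  have hLub' : Real.log (s^3/27) - Real.log ((a 0 t) * (a 1 t) * (a 2 t))
      ≤ (3/4)*(((3*(a 0 t) - s)/s)^2 + ((3*(a 1 t) - s)/s)^2 + ((3*(a 2 t) - s)/s)^2) := by
    rw [hLeq]; linarith [ll0, ll1, ll2, hsx]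
  have hX2 : ((3*(a 0 t) - s)/s)^2 + ((3*(a 1 t) - s)/s)^2 + ((3*(a 2 t) - s)/s)^2 = 3*((((a 0 t) - (a 2 t))^2 + ((a 1 t) - (a 0 t))^2 + ((a 2 t) - (a 1 t))^2))/s^2 := by
    rw [div_pow, div_pow, div_pow, ← add_div, ← add_div, hident]
  have hD2ubL : (((a 0 t) - (a 2 t))^2 + ((a 1 t) - (a 0 t))^2 + ((a 2 t) - (a 1 t))^2) ≤ s^2*(Real.log (s^3/27) - Real.log ((a 0 t) * (a 1 t) * (a 2 t))) := by
    have hm := mul_le_mul_of_nonneg_left hLlb' (sq_nonneg s)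
    have he : s^2*((1/3)*(((3*(a 0 t) - s)/s)^2 + ((3*(a 1 t) - s)/s)^2 + ((3*(a 2 t) - s)/s)^2))
        = (((a 0 t) - (a 2 t))^2 + ((a 1 t) - (a 0 t))^2 + ((a 2 t) - (a 1 t))^2) := by
      rw [hX2]; field_simp
    linarith
  have hD2lbL : 4/9*(s^2*(Real.log (s^3/27) - Real.log ((a 0 t) * (a 1 t) * (a 2 t)))) ≤ (((a 0 t) - (a 2 t))^2 + ((a 1 t) - (a 0 t))^2 + ((a 2 t) - (a 1 t))^2) := by
    have hm := mul_le_mul_of_nonneg_left hLub' (sq_nonneg s)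
    have he : s^2*((3/4)*(((3*(a 0 t) - s)/s)^2 + ((3*(a 1 t) - s)/s)^2 + ((3*(a 2 t) - s)/s)^2))
        = 9/4*((((a 0 t) - (a 2 t))^2 + ((a 1 t) - (a 0 t))^2 + ((a 2 t) - (a 1 t))^2)) := by
      rw [hX2]; field_simp; ring
    linarith
  have hL0 : 0 ≤ Real.log (s^3/27) - Real.log ((a 0 t) * (a 1 t) * (a 2 t)) := by
    have h2 : 0 ≤ s^2*(Real.log (s^3/27) - Real.log ((a 0 t) * (a 1 t) * (a 2 t))) :=
      le_trans hD20 hD2ubL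
    have h3 := div_nonneg h2 (sq_nonneg s)
    rwa [mul_div_cancel_left₀ _ (by positivity : (s:ℝ)^2 ≠ 0)] at h3
  have hCS : (((s*(app 0 t)/(a 0 t) - (a 0 t))*((a 0 t) - (a 2 t)) + (s*(app 1 t)/(a 1 t) - (a 1 t))*((a 1 t) - (a 0 t)) + (s*(app 2 t)/(a 2 t) - (a 2 t))*((a 2 t) - (a 1 t))))^2 ≤ (((s*(app 0 t)/(a 0 t) - (a 0 t))^2 + (s*(app 1 t)/(a 1 t) - (a 1 t))^2 + (s*(app 2 t)/(a 2 t) - (a 2 t))^2)) * ((((a 0 t) - (a 2 t))^2 + ((a 1 t) - (a 0 t))^2 + ((a 2 t) - (a 1 t))^2)) :=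
    cs3 (s*(app 0 t)/(a 0 t) - (a 0 t)) (s*(app 1 t)/(a 1 t) - (a 1 t)) (s*(app 2 t)/(a 2 t) - (a 2 t))
      ((a 0 t) - (a 2 t)) ((a 1 t) - (a 0 t)) ((a 2 t) - (a 1 t))
  have hSlb : -(Real.sqrt ((s*(app 0 t)/(a 0 t) - (a 0 t))^2 + (s*(app 1 t)/(a 1 t) - (a 1 t))^2 + (s*(app 2 t)/(a 2 t) - (a 2 t))^2) * Real.sqrt (((a 0 t) - (a 2 t))^2 + ((a 1 t) - (a 0 t))^2 + ((a 2 t) - (a 1 t))^2)) ≤ ((s*(app 0 t)/(a 0 t) - (a 0 t))*((a 0 t) - (a 2 t)) + (s*(app 1 t)/(a 1 t) - (a 1 t))*((a 1 t) - (a 0 t)) + (s*(app 2 t)/(a 2 t) - (a 2 t))*((a 2 t) - (a 1 t))) := by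
    have h1 : |((s*(app 0 t)/(a 0 t) - (a 0 t))*((a 0 t) - (a 2 t)) + (s*(app 1 t)/(a 1 t) - (a 1 t))*((a 1 t) - (a 0 t)) + (s*(app 2 t)/(a 2 t) - (a 2 t))*((a 2 t) - (a 1 t)))| ≤ Real.sqrt ((s*(app 0 t)/(a 0 t) - (a 0 t))^2 + (s*(app 1 t)/(a 1 t) - (a 1 t))^2 + (s*(app 2 t)/(a 2 t) - (a 2 t))^2) * Real.sqrt (((a 0 t) - (a 2 t))^2 + ((a 1 t) - (a 0 t))^2 + ((a 2 t) - (a 1 t))^2) := by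
      rw [← Real.sqrt_sq_eq_abs, ← Real.sqrt_mul hKsq0]
      exact Real.sqrt_le_sqrt hCS
    linarith [neg_abs_le (((s*(app 0 t)/(a 0 t) - (a 0 t))*((a 0 t) - (a 2 t)) + (s*(app 1 t)/(a 1 t) - (a 1 t))*((a 1 t) - (a 0 t)) + (s*(app 2 t)/(a 2 t) - (a 2 t))*((a 2 t) - (a 1 t))))]
  have tt0 := tterm_bound p s (Real.sqrt (((a 0 t) - (a 2 t))^2 + ((a 1 t) - (a 0 t))^2 + ((a 2 t) - (a 1 t))^2)) (Real.sqrt ((s*(app 0 t)/(a 0 t) - (a 0 t))^2 + (s*(app 1 t)/(a 1 t) - (a 1 t))^2 + (s*(app 2 t)/(a 2 t) - (a 2 t))^2)) (a 0 t) (a 2 t) (a 1 t) (app 0 t) (app 1 t)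
    hp hs hA0lb hA0ub hA2lb hA2ub hA1lb hA1ub habs21 habs01 habsK0 habsK1 hB0l hB0u hB1l hB1u
  have tt1 := tterm_bound p s (Real.sqrt (((a 0 t) - (a 2 t))^2 + ((a 1 t) - (a 0 t))^2 + ((a 2 t) - (a 1 t))^2)) (Real.sqrt ((s*(app 0 t)/(a 0 t) - (a 0 t))^2 + (s*(app 1 t)/(a 1 t) - (a 1 t))^2 + (s*(app 2 t)/(a 2 t) - (a 2 t))^2)) (a 1 t) (a 0 t) (a 2 t) (app 1 t) (app 2 t)
    hp hs hA1lb hA1ub hA0lb hA0ub hA2lb hA2ub habs02 habs12 habsK1 habsK2 hB1l hB1u hB2l hB2u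
  have tt2 := tterm_bound p s (Real.sqrt (((a 0 t) - (a 2 t))^2 + ((a 1 t) - (a 0 t))^2 + ((a 2 t) - (a 1 t))^2)) (Real.sqrt ((s*(app 0 t)/(a 0 t) - (a 0 t))^2 + (s*(app 1 t)/(a 1 t) - (a 1 t))^2 + (s*(app 2 t)/(a 2 t) - (a 2 t))^2)) (a 2 t) (a 1 t) (a 0 t) (app 2 t) (app 0 t)
    hp hs hA2lb hA2ub hA1lb hA1ub hA0lb hA0ub habs10 habs20 habsK2 habsK0 hB2l hB2u hB0l hB0u
  have hT : -((69/5) * (Real.sqrt ((s*(app 0 t)/(a 0 t) - (a 0 t))^2 + (s*(app 1 t)/(a 1 t) - (a 1 t))^2 + (s*(app 2 t)/(a 2 t) - (a 2 t))^2)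
        * (p*s*((56/81)*Real.sqrt (((a 0 t) - (a 2 t))^2 + ((a 1 t) - (a 0 t))^2 + ((a 2 t) - (a 1 t))^2) + (49/162)*Real.sqrt ((s*(app 0 t)/(a 0 t) - (a 0 t))^2 + (s*(app 1 t)/(a 1 t) - (a 1 t))^2 + (s*(app 2 t)/(a 2 t) - (a 2 t))^2)))))
      ≤ (s*(app 0 t)/(a 0 t) - (a 0 t)) * (p*(a 2 t)*((a 0 t)+(app 0 t)) - p*(a 0 t)*((a 1 t)+(app 1 t))) * (s*(app 0 t)/(a 0 t)^2 + 1)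
        + (s*(app 1 t)/(a 1 t) - (a 1 t)) * (p*(a 0 t)*((a 1 t)+(app 1 t)) - p*(a 1 t)*((a 2 t)+(app 2 t))) * (s*(app 1 t)/(a 1 t)^2 + 1)
        + (s*(app 2 t)/(a 2 t) - (a 2 t)) * (p*(a 1 t)*((a 2 t)+(app 2 t)) - p*(a 2 t)*((a 0 t)+(app 0 t))) * (s*(app 2 t)/(a 2 t)^2 + 1) := by
    linarith [tt0, tt1, tt2]
  have hLn : 0 < (Real.log (s^3/27) - Real.log ((a 0 t) * (a 1 t) * (a 2 t))) + 1/n :=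
    add_pos_of_nonneg_of_pos hL0 (by positivity)
  have hKn : 0 < ((s*(app 0 t)/(a 0 t) - (a 0 t))^2 + (s*(app 1 t)/(a 1 t) - (a 1 t))^2 + (s*(app 2 t)/(a 2 t) - (a 2 t))^2) + 1/n :=
    add_pos_of_nonneg_of_pos hKsq0 (by positivity)
  have hprod : HasDerivAt (fun τ => a 0 τ * a 1 τ * a 2 τ) _ t := (hd0.mul hd1).mul hd2
  have hd_log : HasDerivAt (fun τ => Real.log (a 0 τ * a 1 τ * a 2 τ)) _ t :=
    hprod.log (mul_pos (mul_pos hA0 hA1) hA2).ne'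
  have hd_inner : HasDerivAt
      (fun τ => (Real.log (s^3/27) - Real.log (a 0 τ * a 1 τ * a 2 τ)) + 1/n) _ t :=
    ((hasDerivAt_const t (Real.log (s^3/27))).sub hd_log).add_const (1/n)
  have hd_eta : HasDerivAt
      (fun τ => Real.sqrt ((Real.log (s^3/27) - Real.log (a 0 τ * a 1 τ * a 2 τ)) + 1/n)) _ t :=
    hd_inner.sqrt hLn.ne'
  have hk0 : HasDerivAt (fun τ => s * app 0 τ / a 0 τ - a 0 τ) _ t :=
    (((hdapp 0 t).const_mul s).div hd0 hA0.ne').sub hd0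
  have hk1 : HasDerivAt (fun τ => s * app 1 τ / a 1 τ - a 1 τ) _ t :=
    (((hdapp 1 t).const_mul s).div hd1 hA1.ne').sub hd1
  have hk2 : HasDerivAt (fun τ => s * app 2 τ / a 2 τ - a 2 τ) _ t :=
    (((hdapp 2 t).const_mul s).div hd2 hA2.ne').sub hd2
  have hd_kin : HasDerivAt
      (fun τ => ((s * app 0 τ / a 0 τ - a 0 τ)^2 + (s * app 1 τ / a 1 τ - a 1 τ)^2
        + (s * app 2 τ / a 2 τ - a 2 τ)^2) + 1/n) _ t :=
    (((hk0.pow 2).add (hk1.pow 2)).add (hk2.pow 2)).add_const (1/n)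
  have hd_k : HasDerivAt
      (fun τ => Real.sqrt (((s * app 0 τ / a 0 τ - a 0 τ)^2 + (s * app 1 τ / a 1 τ - a 1 τ)^2
        + (s * app 2 τ / a 2 τ - a 2 τ)^2) + 1/n)) _ t :=
    hd_kin.sqrt hKn.ne'
  refine ⟨⟨hd_eta.differentiableAt, hd_k.differentiableAt⟩, ?_, ?_⟩
  · rw [ge_iff_le, hd_eta.deriv]
    refine eta_ineq s p n _ _ ((((a 0 t) - (a 2 t))^2 + ((a 1 t) - (a 0 t))^2 + ((a 2 t) - (a 1 t))^2)) (((s*(app 0 t)/(a 0 t) - (a 0 t))*((a 0 t) - (a 2 t)) + (s*(app 1 t)/(a 1 t) - (a 1 t))*((a 1 t) - (a 0 t)) + (s*(app 2 t)/(a 2 t) - (a 2 t))*((a 2 t) - (a 1 t)))) _ hs hp hn ?_ hSlb hD2lbL hD2ubL hKsq0 hL0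
    simp only [Pi.mul_apply]
    field_simp
    ring
  · rw [hd_k.deriv]
    refine kappa_ineq s p n _ _ ((((a 0 t) - (a 2 t))^2 + ((a 1 t) - (a 0 t))^2 + ((a 2 t) - (a 1 t))^2)) _
      ((s*(app 0 t)/(a 0 t) - (a 0 t)) * (p*(a 2 t)*((a 0 t)+(app 0 t)) - p*(a 0 t)*((a 1 t)+(app 1 t))) * (s*(app 0 t)/(a 0 t)^2 + 1)
        + (s*(app 1 t)/(a 1 t) - (a 1 t)) * (p*(a 0 t)*((a 1 t)+(app 1 t)) - p*(a 1 t)*((a 2 t)+(app 2 t))) * (s*(app 1 t)/(a 1 t)^2 + 1)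
        + (s*(app 2 t)/(a 2 t) - (a 2 t)) * (p*(a 1 t)*((a 2 t)+(app 2 t)) - p*(a 2 t)*((a 0 t)+(app 0 t))) * (s*(app 2 t)/(a 2 t)^2 + 1))
      hs hs1 hp hp18 hn ?_ hT hD2ubL hKsq0 hL0
    norm_num
    field_simp
    ring
end

section
/- Fix reals s with 0 < s ≤ 1, p > 0, x ≥ 0, an index i ∈ {1,2,3} (indices cyclic mod 3), reals a₁, a₂, a₃ ≥ 0 with a₁+a₂+a₃ = s, and reals aⱼ⁺⁺ with 0 ≤ aⱼ⁺⁺ ≤ aⱼ for j ∈ {1,2,3}. If aᵢ₋₁ < 0.8·s and aᵢ₊₁ < 0.05·s, then x·(s/3 − aᵢ₋₁) + p·aᵢ₊₁·(aᵢ₋₁ + aᵢ₋₁⁺⁺) − p·aᵢ₋₁·(aᵢ + aᵢ⁺⁺) ≤ x·s/3 − 0.05·p·s·aᵢ₋₁. -/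
/-- If `aᵢ₋₁ < 0.8s` and `aᵢ₊₁ < 0.05s`, then the drift of species `i−1`
satisfies `ȧᵢ₋₁ ≤ xs/3 − 0.05psaᵢ₋₁`. -/
theorem drift_bound_region_one
    (s p x : ℝ) (hs : 0 < s) (hs1 : s ≤ 1) (hp : 0 < p) (hx : 0 ≤ x)
    (i : ZMod 3)
    (a app : ZMod 3 → ℝ)
    (hnn : ∀ j, 0 ≤ a j)
    (hsum : a 0 + a 1 + a 2 = s)
    (happ : ∀ j, 0 ≤ app j ∧ app j ≤ a j)
    (h1 : a (i - 1) < 0.8 * s) (h2 : a (i + 1) < 0.05 * s) :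
    x * (s / 3 - a (i - 1)) + p * a (i + 1) * (a (i - 1) + app (i - 1))
        - p * a (i - 1) * (a i + app i)
      ≤ x * s / 3 - 0.05 * p * s * a (i - 1) := by
  set b := a (i - 1) with hb
  set c := a (i + 1) with hc
  set d := a i with hd
  have hcyc : b + d + c = s := by
    rw [hb, hc, hd]
    fin_cases i
    · show a 2 + a 0 + a 1 = s; linarith
    · show a 0 + a 1 + a 2 = s; linarith
    · show a 1 + a 2 + a 0 = s; linarith
  have hbn := hnn (i - 1)
  have hcn := hnn (i + 1)
  have hq := happ (i - 1)
  have hr := happ i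
  have hdlb : 0.15 * s < d := by linarith
  -- Term 1
  have T1 : x * (s / 3 - b) ≤ x * (s / 3) :=
    mul_le_mul_of_nonneg_left (by linarith) hx
  have e1 : x * (s / 3) = x * s / 3 := by ring
  -- Term 2
  have hc2 : c * (b + app (i - 1)) ≤ (0.05 * s) * (2 * b) :=
    mul_le_mul h2.le (by linarith [hq.2]) (by linarith [hq.1]) (by linarith)
  have T2 : p * (c * (b + app (i - 1))) ≤ p * ((0.05 * s) * (2 * b)) :=
    mul_le_mul_of_nonneg_left hc2 hp.le
  have e2 : p * ((0.05 * s) * (2 * b)) = 0.1 * p * s * b := by ring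
  have e2' : p * c * (b + app (i - 1)) = p * (c * (b + app (i - 1))) := by ring
  -- Term 3
  have hd3 : b * (0.15 * s) ≤ b * (d + app i) :=
    mul_le_mul_of_nonneg_left (by linarith [hr.1]) hbn
  have T3 : p * (b * (0.15 * s)) ≤ p * (b * (d + app i)) :=
    mul_le_mul_of_nonneg_left hd3 hp.le
  have e3 : p * (b * (0.15 * s)) = 0.15 * p * s * b := by ring
  have e3' : p * b * (d + app i) = p * (b * (d + app i)) := by ring
  linarith
end

section
/- Fix reals s with 0 < s ≤ 1, p > 0, x ≥ 0, an index i ∈ {1,2,3} (indices cyclic mod 3), reals a₁, a₂, a₃ ≥ 0 with a₁+a₂+a₃ = s, and reals aⱼ⁺⁺ with 0 ≤ aⱼ⁺⁺ ≤ aⱼ for j ∈ {1,2,3}. If aᵢ₊₁ < 0.25·s and aᵢ₋₁ < 0.05·s, then x·(s/3 − aᵢ₋₁) + p·aᵢ₊₁·(aᵢ₋₁ + aᵢ₋₁⁺⁺) − p·aᵢ₋₁·(aᵢ + aᵢ⁺⁺) ≤ x·s/3 − 0.2·p·s·aᵢ₋₁. -/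
/-- If `aᵢ₊₁ < 0.25s` and `aᵢ₋₁ < 0.05s`, then the drift of species `i−1`
satisfies `ȧᵢ₋₁ ≤ xs/3 − 0.2psaᵢ₋₁`. -/
theorem drift_bound_region_two_decay
    (s p x : ℝ) (hs : 0 < s) (hs1 : s ≤ 1) (hp : 0 < p) (hx : 0 ≤ x)
    (i : ZMod 3)
    (a app : ZMod 3 → ℝ)
    (hnn : ∀ j, 0 ≤ a j)
    (hsum : a 0 + a 1 + a 2 = s)
    (happ : ∀ j, 0 ≤ app j ∧ app j ≤ a j)
    (h1 : a (i + 1) < 0.25 * s) (h2 : a (i - 1) < 0.05 * s) :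
    x * (s / 3 - a (i - 1)) + p * a (i + 1) * (a (i - 1) + app (i - 1))
        - p * a (i - 1) * (a i + app i)
      ≤ x * s / 3 - 0.2 * p * s * a (i - 1) := by
  have hi : i = 0 ∨ i = 1 ∨ i = 2 := by
    fin_cases i
    · exact Or.inl rfl
    · exact Or.inr (Or.inl rfl)
    · exact Or.inr (Or.inr rfl)
  have e1 : (0:ZMod 3) - 1 = 2 := by decide
  have e2 : (2:ZMod 3) + 1 = 0 := by decide
  have hs3 : a i + a (i + 1) + a (i - 1) = s := by
    rcases hi with rfl | rfl | rfl
    · rw [show (0:ZMod 3) + 1 = 1 from rfl, e1]; linarith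
    · rw [show (1:ZMod 3) + 1 = 2 from by decide, show (1:ZMod 3) - 1 = 0 from by decide]; linarith
    · rw [e2, show (2:ZMod 3) - 1 = 1 from by decide]; linarith
  have h3 := hnn i
  have h4 := hnn (i + 1)
  have h5 := hnn (i - 1)
  have h6 := (happ i).1
  have h7 := (happ (i - 1)).2
  nlinarith [mul_nonneg hx h5,
    mul_nonneg (mul_nonneg hp.le h4) (by linarith : (0:ℝ) ≤ a (i - 1) - app (i - 1)),
    mul_nonneg (mul_nonneg hp.le h5) h6,
    mul_nonneg (mul_nonneg hp.le h5) (by linarith : (0:ℝ) ≤ 0.25 * s - a (i + 1)),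
    mul_nonneg (mul_nonneg hp.le h5) (by linarith : (0:ℝ) ≤ 0.05 * s - a (i - 1))]
end
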